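/- arXiv:1005.1893 — 6 statements merged into one kernel-verified Lean document; each statement's English description precedes it below -/
import Mathlib

section
/- Let a = (a₁,…,aₙ) ∈ [0,1]ⁿ be a sequence with pairwise distinct entries. Then LAₙ(a) equals the number of local maxima of a plus the number of local minima of a. -/
open MeasureTheory Filter Finset

noncomputable section

attribute [local instance] Classical.propDecidable

/-- A list of values is alternating (starting with a descent):
`l 0 > l 1 < l 2 > l 3 < ⋯`. -/
def IsAltList {α : Type*} [LT α] (l : List α) : Prop :=
  ∀ i : ℕ, ∀ h : i + 1 < l.length,
    if i % 2 = 0 then l[i+1]'h < l[i]'(Nat.lt_of_succ_lt h)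
    else l[i]'(Nat.lt_of_succ_lt h) < l[i+1]'h

/-- The length of the longest alternating subsequence of `a` along the index
set `s`: the largest `m` for which there is an increasing list of `m` indices,
all belonging to `s`, along which `a` alternates (starting with a descent). -/
def LAon {α : Type*} [LinearOrder α] (a : ℕ → α) (s : Finset ℕ) : ℕ :=
  sSup {m | ∃ l : List ℕ, l.length = m ∧ l.Chain' (· < ·) ∧ (∀ i ∈ l, i ∈ s) ∧
    IsAltList (l.map a)}

/-- `a = (a 1, …, a n)` has a local maximum at the index `k`:
(i) `a k > a (k+1)` or `k = n`, and (ii) `a k > a (k-1)` or `k = 1`. -/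
def LocalMaxAt (a : ℕ → ℝ) (n k : ℕ) : Prop :=
  (a (k + 1) < a k ∨ k = n) ∧ (a (k - 1) < a k ∨ k = 1)

/-- `a = (a 1, …, a n)` has a local minimum at the index `k`:
(i) `a k < a (k+1)` or `k = n`, and (ii) `a k < a (k-1)` and `k > 1`. -/
def LocalMinAt (a : ℕ → ℝ) (n k : ℕ) : Prop :=
  (a k < a (k + 1) ∨ k = n) ∧ (a k < a (k - 1) ∧ 1 < k)

/-! ### Auxiliary definitions -/

def ExtAt (a : ℕ → ℝ) (n k : ℕ) : Prop := LocalMaxAt a n k ∨ LocalMinAt a n k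

def extSet (a : ℕ → ℝ) (n : ℕ) : Finset ℕ := (Finset.Icc 1 n).filter (ExtAt a n)

def fe (a : ℕ → ℝ) (n i : ℕ) : ℕ := sInf {e | e ∈ extSet a n ∧ i ≤ e}

def psi (a : ℕ → ℝ) (n i : ℕ) : ℕ := ((extSet a n).filter (fun e => i ≤ e)).card

def Bb (a : ℕ → ℝ) (n : ℕ) (b : Bool) (i : ℕ) : ℕ :=
  psi a n i +
    (if (if b then LocalMinAt a n (fe a n i) else LocalMaxAt a n (fe a n i)) then 1 else 0)

def IsAltB {α : Type*} [LT α] (b : Bool) (l : List α) : Prop :=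
  ∀ i : ℕ, ∀ h : i + 1 < l.length,
    if (i % 2 = 0 ↔ b = true) then l[i+1]'h < l[i]'(Nat.lt_of_succ_lt h)
    else l[i]'(Nat.lt_of_succ_lt h) < l[i+1]'h

section lemmas

variable {n : ℕ} {a : ℕ → ℝ}

/-- distinctness hypothesis abbreviation -/
def HD (a : ℕ → ℝ) (n : ℕ) : Prop :=
  ∀ i ∈ Finset.Icc 1 n, ∀ j ∈ Finset.Icc 1 n, a i = a j → i = j

lemma Bb_le (b : Bool) (i : ℕ) : Bb a n b i ≤ psi a n i + 1 := by
  cases b <;> simp only [Bb, if_true, Bool.false_eq_true, if_false] <;> split <;> omega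

lemma psi_le_Bb (b : Bool) (i : ℕ) : psi a n i ≤ Bb a n b i := by
  cases b <;> simp only [Bb, if_true, Bool.false_eq_true, if_false] <;> split <;> omega

lemma tri (hd : HD a n) {i j : ℕ} (hi1 : 1 ≤ i) (hin : i ≤ n) (hj1 : 1 ≤ j)
    (hjn : j ≤ n) (hij : i ≠ j) : a i < a j ∨ a j < a i := by
  rcases lt_trichotomy (a i) (a j) with h | h | h
  · exact Or.inl h
  · exact absurd (hd i (Finset.mem_Icc.mpr ⟨hi1, hin⟩) j (Finset.mem_Icc.mpr ⟨hj1, hjn⟩) h) hij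
  · exact Or.inr h

lemma not_max_of_min {k : ℕ} (h : LocalMinAt a n k) : ¬ LocalMaxAt a n k := by
  rintro ⟨-, h2⟩
  rcases h2 with h2 | h2
  · exact absurd h2 (not_lt.mpr h.2.1.le)
  · exact absurd h2 (by have := h.2.2; omega)
    


lemma ext_last (hd : HD a n) (hn : 1 ≤ n) : ExtAt a n n := by
  rcases eq_or_lt_of_le hn with h1 | h1
  · exact Or.inl ⟨Or.inr rfl, Or.inr h1.symm⟩
  · rcases tri hd (i := n - 1) (j := n) (by omega) (by omega) hn le_rfl (by omega) with h | h
    · exact Or.inl ⟨Or.inr rfl, Or.inl h⟩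
    · exact Or.inr ⟨Or.inr rfl, h, h1⟩

lemma min_next (hd : HD a n) {j : ℕ} (hj : 1 ≤ j) (hj2 : j + 1 ≤ n)
    (hlt : a (j+1) < a j) (hm : ¬ LocalMinAt a n (j+1)) :
    j + 1 < n ∧ a (j+2) < a (j+1) := by
  have h2 : ¬ (a (j+1) < a (j+1+1) ∨ j + 1 = n) := by
    intro hc
    exact hm ⟨hc, by simpa using hlt, by omega⟩
  push_neg at h2
  refine ⟨by omega, ?_⟩
  rcases tri hd (i := j+1) (j := j+2) (by omega) (by omega) (by omega) (by omega) (by omega)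
    with h | h
  · exfalso; have h3 := h2.1; simp only [show j+1+1 = j+2 by rfl] at h3; linarith
  · exact h

lemma max_next (hd : HD a n) {j : ℕ} (hj : 1 ≤ j) (hj2 : j + 1 ≤ n)
    (hlt : a j < a (j+1)) (hm : ¬ LocalMaxAt a n (j+1)) :
    j + 1 < n ∧ a (j+1) < a (j+2) := by
  have h2 : ¬ (a (j+1+1) < a (j+1) ∨ j + 1 = n) := by
    intro hc
    exact hm ⟨hc, Or.inl (by simpa using hlt)⟩
  push_neg at h2
  refine ⟨by omega, ?_⟩
  rcases tri hd (i := j+1) (j := j+2) (by omega) (by omega) (by omega) (by omega) (by omega)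
    with h | h
  · exact h
  · exfalso; have h3 := h2.1; simp only [show j+1+1 = j+2 by rfl] at h3; linarith

lemma max_back (hd : HD a n) {j : ℕ} (hj : 1 ≤ j) (hj2 : j + 1 ≤ n)
    (hlt : a (j+1) < a j) (hm : ¬ LocalMaxAt a n j) :
    1 < j ∧ a j < a (j-1) := by
  have h2 : ¬ (a (j-1) < a j ∨ j = 1) := fun hc => hm ⟨Or.inl hlt, hc⟩
  push_neg at h2
  refine ⟨by omega, ?_⟩
  rcases tri hd (i := j-1) (j := j) (by omega) (by omega) (by omega) (by omega) (by omega)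
    with h | h
  · exfalso; have h3 := h2.1; linarith
  · exact h

lemma exists_max (hd : HD a n) {j : ℕ} (hj : 1 ≤ j) (hj2 : j + 1 ≤ n)
    (hlt : a (j+1) < a j) : ∃ k, 1 ≤ k ∧ k ≤ j ∧ LocalMaxAt a n k := by
  induction j using Nat.strong_induction_on with
  | _ j ih =>
    by_cases hmx : LocalMaxAt a n j
    · exact ⟨j, hj, le_rfl, hmx⟩
    · obtain ⟨h1, h2⟩ := max_back hd hj hj2 hlt hmx
      have e1 : j - 1 + 1 = j := by omega
      obtain ⟨k, hk1, hk2, hk3⟩ := ih (j-1) (by omega) (by omega) (by omega)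
        (by rw [e1]; exact h2)
      exact ⟨k, hk1, by omega, hk3⟩

lemma gap_desc (hd : HD a n) {x y : ℕ} (hx : 1 ≤ x) (hy : y ≤ n) (hxy : x < y)
    (h0 : a (x+1) < a x) (hgap : ∀ k, x < k → k < y → ¬ ExtAt a n k) :
    ∀ j, x ≤ j → j < y → a (j+1) < a j := by
  intro j
  induction j using Nat.strong_induction_on with
  | _ j ih =>
    intro hxj hjy
    rcases eq_or_lt_of_le hxj with h | h
    · rwa [← h]
    · have hj1 : x ≤ j - 1 := by omega
      have hprev : a (j-1+1) < a (j-1) := ih (j-1) (by omega) hj1 (by omega)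
      have hne : ¬ LocalMinAt a n (j-1+1) := by
        intro hc
        exact hgap (j-1+1) (by omega) (by omega) (Or.inr hc)
      have := min_next hd (by omega) (by omega) hprev hne
      have hj : j - 1 + 1 = j := by omega
      rw [hj] at this
      have hj2 : j - 1 + 2 = j + 1 := by omega
      rw [hj2] at this
      exact this.2

lemma gap_asc (hd : HD a n) {x y : ℕ} (hx : 1 ≤ x) (hy : y ≤ n) (hxy : x < y)
    (h0 : a x < a (x+1)) (hgap : ∀ k, x < k → k < y → ¬ ExtAt a n k) :
    ∀ j, x ≤ j → j < y → a j < a (j+1) := by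
  intro j
  induction j using Nat.strong_induction_on with
  | _ j ih =>
    intro hxj hjy
    rcases eq_or_lt_of_le hxj with h | h
    · rwa [← h]
    · have hprev : a (j-1) < a (j-1+1) := ih (j-1) (by omega) (by omega) (by omega)
      have hne : ¬ LocalMaxAt a n (j-1+1) := by
        intro hc
        exact hgap (j-1+1) (by omega) (by omega) (Or.inl hc)
      have := max_next hd (by omega) (by omega) hprev hne
      have hj : j - 1 + 1 = j := by omega
      rw [hj] at this
      have hj2 : j - 1 + 2 = j + 1 := by omega
      rw [hj2] at this
      exact this.2

lemma chain_desc_lt {x : ℕ} : ∀ y, x < y → (∀ j, x ≤ j → j < y → a (j+1) < a j) →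
    a y < a x := by
  intro y
  induction y with
  | zero => intro h _; omega
  | succ y ih =>
    intro h hc
    rcases Nat.lt_or_ge x y with h1 | h1
    · exact lt_trans (hc y (by omega) (by omega))
        (ih h1 (fun j hj hjy => hc j hj (by omega)))
    · have hxy : x = y := by omega
      subst hxy
      exact hc x le_rfl (by omega)

lemma chain_asc_lt {x : ℕ} : ∀ y, x < y → (∀ j, x ≤ j → j < y → a j < a (j+1)) →
    a x < a y := by
  intro y
  induction y with
  | zero => intro h _; omega
  | succ y ih =>
    intro h hc
    rcases Nat.lt_or_ge x y with h1 | h1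
    · exact lt_trans (ih h1 (fun j hj hjy => hc j hj (by omega)))
        (hc y (by omega) (by omega))
    · have hxy : x = y := by omega
      subst hxy
      exact hc x le_rfl (by omega)


/-! ### fe / psi lemmas -/

lemma feSet_ne (hd : HD a n) {i : ℕ} (hi : i ≤ n) (hn : 1 ≤ n) :
    {e | e ∈ extSet a n ∧ i ≤ e}.Nonempty := by
  refine ⟨n, ?_, hi⟩
  simp only [extSet, Finset.mem_filter, Finset.mem_Icc]
  exact ⟨⟨hn, le_rfl⟩, ext_last hd hn⟩

lemma fe_spec (hd : HD a n) {i : ℕ} (hi : i ≤ n) (hn : 1 ≤ n) :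
    fe a n i ∈ extSet a n ∧ i ≤ fe a n i :=
  Nat.sInf_mem (feSet_ne hd hi hn)

lemma fe_ext (hd : HD a n) {i : ℕ} (hi : i ≤ n) (hn : 1 ≤ n) : ExtAt a n (fe a n i) := by
  have := (fe_spec hd hi hn).1
  simp only [extSet, Finset.mem_filter] at this
  exact this.2

lemma fe_ge (hd : HD a n) {i : ℕ} (hi : i ≤ n) (hn : 1 ≤ n) : i ≤ fe a n i :=
  (fe_spec hd hi hn).2

lemma fe_bounds (hd : HD a n) {i : ℕ} (hi : i ≤ n) (hn : 1 ≤ n) :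
    1 ≤ fe a n i ∧ fe a n i ≤ n := by
  have := (fe_spec hd hi hn).1
  simp only [extSet, Finset.mem_filter, Finset.mem_Icc] at this
  exact this.1

lemma fe_le {i e : ℕ} (he : e ∈ extSet a n) (hie : i ≤ e) : fe a n i ≤ e :=
  Nat.sInf_le ⟨he, hie⟩

lemma fe_gap {i k : ℕ} (hik : i ≤ k) (hk : k < fe a n i) (h1 : 1 ≤ k) (h2 : k ≤ n) :
    ¬ ExtAt a n k := by
  intro hc
  have : fe a n i ≤ k :=
    fe_le (by simp only [extSet, Finset.mem_filter, Finset.mem_Icc]; exact ⟨⟨h1, h2⟩, hc⟩) hik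
  omega

lemma psi_mono {i j : ℕ} (hij : i ≤ j) : psi a n j ≤ psi a n i := by
  apply Finset.card_le_card
  intro e he
  simp only [Finset.mem_filter] at he ⊢
  exact ⟨he.1, le_trans hij he.2⟩

lemma psi_pos (hd : HD a n) {i : ℕ} (hi : i ≤ n) (hn : 1 ≤ n) : 1 ≤ psi a n i := by
  refine Finset.card_pos.mpr ⟨n, ?_⟩
  simp only [Finset.mem_filter, extSet, Finset.mem_Icc]
  exact ⟨⟨⟨hn, le_rfl⟩, ext_last hd hn⟩, hi⟩

lemma psi_drop1 {i y e : ℕ} (he : e ∈ extSet a n) (hie : i ≤ e) (hey : e < y) :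
    1 + psi a n y ≤ psi a n i := by
  have hsub : insert e ((extSet a n).filter (fun e' => y ≤ e')) ⊆
      (extSet a n).filter (fun e' => i ≤ e') := by
    intro x hx
    rcases Finset.mem_insert.mp hx with h | h
    · subst h; exact Finset.mem_filter.mpr ⟨he, hie⟩
    · have := Finset.mem_filter.mp h
      exact Finset.mem_filter.mpr ⟨this.1, by omega⟩
  have hnotin : e ∉ (extSet a n).filter (fun e' => y ≤ e') := by
    simp only [Finset.mem_filter]
    rintro ⟨-, h⟩; omega
  calc 1 + psi a n y = (insert e ((extSet a n).filter (fun e' => y ≤ e'))).card := by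
        rw [Finset.card_insert_of_notMem hnotin, psi]; ring
    _ ≤ _ := Finset.card_le_card hsub

lemma psi_drop2 {i y e m : ℕ} (he : e ∈ extSet a n) (hm : m ∈ extSet a n)
    (hie : i ≤ e) (him : i ≤ m) (hey : e < y) (hmy : m < y) (hem : e ≠ m) :
    2 + psi a n y ≤ psi a n i := by
  have hsub : insert e (insert m ((extSet a n).filter (fun e' => y ≤ e'))) ⊆
      (extSet a n).filter (fun e' => i ≤ e') := by
    intro x hx
    rcases Finset.mem_insert.mp hx with h | h
    · subst h; exact Finset.mem_filter.mpr ⟨he, hie⟩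
    rcases Finset.mem_insert.mp h with h | h
    · subst h; exact Finset.mem_filter.mpr ⟨hm, him⟩
    · have := Finset.mem_filter.mp h
      exact Finset.mem_filter.mpr ⟨this.1, by omega⟩
  have hm1 : m ∉ (extSet a n).filter (fun e' => y ≤ e') := by
    simp only [Finset.mem_filter]; rintro ⟨-, h⟩; omega
  have he1 : e ∉ insert m ((extSet a n).filter (fun e' => y ≤ e')) := by
    simp only [Finset.mem_insert, Finset.mem_filter]
    rintro (h | ⟨-, h⟩) <;> omega
  calc 2 + psi a n y
      = (insert e (insert m ((extSet a n).filter (fun e' => y ≤ e')))).card := by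
        rw [Finset.card_insert_of_notMem he1, Finset.card_insert_of_notMem hm1, psi]; ring
    _ ≤ _ := Finset.card_le_card hsub

/-- If `i` is strictly below its first extremum and the sequence descends at `i`,
then that first extremum is a local min, and the sequence descends all the way. -/
lemma fe_dir_desc (hd : HD a n) {i : ℕ} (hi1 : 1 ≤ i) (hin : i ≤ n) (hn : 1 ≤ n)
    (hlt : i < fe a n i) (h0 : a (i+1) < a i) :
    LocalMinAt a n (fe a n i) ∧ (∀ j, i ≤ j → j < fe a n i → a (j+1) < a j) := by
  have hfn := (fe_bounds hd hin hn).2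
  have hchain : ∀ j, i ≤ j → j < fe a n i → a (j+1) < a j :=
    gap_desc hd hi1 hfn hlt h0 (fun k hk1 hk2 => fe_gap (by omega) hk2 (by omega) (by omega))
  refine ⟨?_, hchain⟩
  have hlast : a (fe a n i) < a (fe a n i - 1) := by
    have := hchain (fe a n i - 1) (by omega) (by omega)
    have e1 : fe a n i - 1 + 1 = fe a n i := by omega
    rwa [e1] at this
  rcases fe_ext hd hin hn with hmx | hmn
  · exfalso
    rcases hmx.2 with h | h
    · linarith
    · omega
  · exact hmn

lemma fe_dir_asc (hd : HD a n) {i : ℕ} (hi1 : 1 ≤ i) (hin : i ≤ n) (hn : 1 ≤ n)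
    (hlt : i < fe a n i) (h0 : a i < a (i+1)) :
    LocalMaxAt a n (fe a n i) ∧ (∀ j, i ≤ j → j < fe a n i → a j < a (j+1)) := by
  have hfn := (fe_bounds hd hin hn).2
  have hchain : ∀ j, i ≤ j → j < fe a n i → a j < a (j+1) :=
    gap_asc hd hi1 hfn hlt h0 (fun k hk1 hk2 => fe_gap (by omega) hk2 (by omega) (by omega))
  refine ⟨?_, hchain⟩
  have hlast : a (fe a n i - 1) < a (fe a n i) := by
    have := hchain (fe a n i - 1) (by omega) (by omega)
    have e1 : fe a n i - 1 + 1 = fe a n i := by omega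
    rwa [e1] at this
  rcases fe_ext hd hin hn with hmx | hmn
  · exact hmx
  · exfalso
    have := hmn.2.1
    linarith

/-- Consecutive extrema alternate: after a max comes a min (and the value drops). -/
lemma consec_max (hd : HD a n) {e e' : ℕ} (he1 : 1 ≤ e) (hmx : LocalMaxAt a n e)
    (he' : ExtAt a n e') (hee : e < e') (he'n : e' ≤ n)
    (hgap : ∀ k, e < k → k < e' → ¬ ExtAt a n k) :
    LocalMinAt a n e' ∧ a e' < a e := by
  have hen : e < n := by omega
  have h0 : a (e+1) < a e := by
    rcases hmx.1 with h | h
    · exact h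
    · omega
  have hchain := gap_desc hd he1 he'n hee h0 hgap
  have hval : a e' < a e := chain_desc_lt e' hee hchain
  have hlast : a e' < a (e' - 1) := by
    have := hchain (e' - 1) (by omega) (by omega)
    have e1 : e' - 1 + 1 = e' := by omega
    rwa [e1] at this
  rcases he' with hmx' | hmn'
  · exfalso
    rcases hmx'.2 with h | h
    · linarith
    · omega
  · exact ⟨hmn', hval⟩

lemma consec_min (hd : HD a n) {e e' : ℕ} (he1 : 1 ≤ e) (hmn : LocalMinAt a n e)
    (he' : ExtAt a n e') (hee : e < e') (he'n : e' ≤ n)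
    (hgap : ∀ k, e < k → k < e' → ¬ ExtAt a n k) :
    LocalMaxAt a n e' ∧ a e < a e' := by
  have hen : e < n := by omega
  have h0 : a e < a (e+1) := by
    rcases hmn.1 with h | h
    · exact h
    · omega
  have hchain := gap_asc hd he1 he'n hee h0 hgap
  have hval : a e < a e' := chain_asc_lt e' hee hchain
  have hlast : a (e' - 1) < a e' := by
    have := hchain (e' - 1) (by omega) (by omega)
    have e1 : e' - 1 + 1 = e' := by omega
    rwa [e1] at this
  rcases he' with hmx' | hmn'
  · exact ⟨hmx', hval⟩
  · exfalso
    have := hmn'.2.1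
    linarith


/-! ### Step lemmas for the upper bound -/

lemma mem_extSet {k : ℕ} (h1 : 1 ≤ k) (h2 : k ≤ n) (h : ExtAt a n k) :
    k ∈ extSet a n := by
  simp only [extSet, Finset.mem_filter, Finset.mem_Icc]
  exact ⟨⟨h1, h2⟩, h⟩

lemma extSet_bounds {k : ℕ} (h : k ∈ extSet a n) : 1 ≤ k ∧ k ≤ n := by
  simp only [extSet, Finset.mem_filter, Finset.mem_Icc] at h
  exact h.1

lemma extSet_prop {k : ℕ} (h : k ∈ extSet a n) : ExtAt a n k := by
  simp only [extSet, Finset.mem_filter] at h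
  exact h.2

/-- After a local max `e` (with something beyond it), the next extremum is a min
that comes before any later max. -/
lemma min_between (hd : HD a n) {e y : ℕ} (he1 : 1 ≤ e) (hmx : LocalMaxAt a n e)
    (hey : e < y) (hyn : y ≤ n) (hfy : LocalMaxAt a n (fe a n y)) :
    ∃ m, m ∈ extSet a n ∧ LocalMinAt a n m ∧ e < m ∧ m < y := by
  have hn : 1 ≤ n := by omega
  set m := fe a n (e+1) with hm
  have hm1 : e + 1 ≤ n := by omega
  have hmem := fe_spec hd hm1 hn
  have hmbd := fe_bounds hd hm1 hn
  have hgap : ∀ k, e < k → k < m → ¬ ExtAt a n k := fun k hk1 hk2 =>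
    fe_gap (i := e+1) (by omega) hk2 (by omega) (by omega)
  obtain ⟨hmin, -⟩ := consec_max hd he1 hmx (fe_ext hd hm1 hn) (by omega) hmbd.2 hgap
  refine ⟨m, hmem.1, hmin, by omega, ?_⟩
  -- m < y
  by_contra hmy
  push_neg at hmy
  have h1 : fe a n y ≤ m := fe_le hmem.1 hmy
  have h2 : m ≤ fe a n y := by
    apply fe_le
    · exact mem_extSet (fe_bounds hd hyn hn).1 (fe_bounds hd hyn hn).2 (Or.inl hfy)
    · have := fe_ge hd hyn hn
      omega
  have heq : m = fe a n y := le_antisymm h2 h1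
  exact not_max_of_min (heq ▸ hmin) hfy

lemma max_between (hd : HD a n) {e y : ℕ} (he1 : 1 ≤ e) (hmn : LocalMinAt a n e)
    (hey : e < y) (hyn : y ≤ n) (hfy : LocalMinAt a n (fe a n y)) :
    ∃ m, m ∈ extSet a n ∧ LocalMaxAt a n m ∧ e < m ∧ m < y := by
  have hn : 1 ≤ n := by omega
  set m := fe a n (e+1) with hm
  have hm1 : e + 1 ≤ n := by omega
  have hmem := fe_spec hd hm1 hn
  have hmbd := fe_bounds hd hm1 hn
  have hgap : ∀ k, e < k → k < m → ¬ ExtAt a n k := fun k hk1 hk2 =>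
    fe_gap (i := e+1) (by omega) hk2 (by omega) (by omega)
  obtain ⟨hmax, -⟩ := consec_min hd he1 hmn (fe_ext hd hm1 hn) (by omega) hmbd.2 hgap
  refine ⟨m, hmem.1, hmax, by omega, ?_⟩
  by_contra hmy
  push_neg at hmy
  have h1 : fe a n y ≤ m := fe_le hmem.1 hmy
  have h2 : m ≤ fe a n y := by
    apply fe_le
    · exact mem_extSet (fe_bounds hd hyn hn).1 (fe_bounds hd hyn hn).2 (Or.inr hfy)
    · have := fe_ge hd hyn hn
      omega
  have heq : m = fe a n y := le_antisymm h2 h1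
  exact not_max_of_min hfy (heq ▸ hmax)

lemma step_high (hd : HD a n) {x y : ℕ} (hx1 : 1 ≤ x) (hyn : y ≤ n) (hxy : x < y)
    (hv : a y < a x) : 1 + Bb a n false y ≤ Bb a n true x := by
  have hn : 1 ≤ n := by omega
  have hxn : x ≤ n := by omega
  have hy1 : 1 ≤ y := by omega
  set e := fe a n x with he
  have heext := fe_ext hd hxn hn
  have hebd := fe_bounds hd hxn hn
  have hemem := (fe_spec hd hxn hn).1
  have hxe : x ≤ e := fe_ge hd hxn hn
  by_cases hmax : LocalMaxAt a n e
  · -- Bb true x = psi x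
    have hBx : Bb a n true x = psi a n x := by
      have h1 : ¬ LocalMinAt a n (fe a n x) := fun hc => not_max_of_min hc hmax
      simp only [Bb, if_true, if_neg h1, add_zero]
    rcases Nat.lt_or_ge e y with hey | hey
    · by_cases hfy : LocalMaxAt a n (fe a n y)
      · obtain ⟨m, hmmem, hmmin, hem, hmy⟩ := min_between hd hebd.1 hmax hey hyn hfy
        have hdrop := psi_drop2 hemem hmmem hxe (by omega) hey hmy (by omega)
        have hBy : Bb a n false y ≤ psi a n y + 1 := Bb_le _ _
        omega
      · have hdrop := psi_drop1 hemem hxe hey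
        have hBy : Bb a n false y = psi a n y := by
          simp only [Bb, Bool.false_eq_true, if_false, if_neg hfy, add_zero]
        omega
    · exfalso
      have hxe' : x < e := by omega
      rcases tri hd (i := x) (j := x + 1) hx1 hxn (by omega) (by omega) (by omega)
        with hasc | hdesc
      · obtain ⟨-, hchain⟩ := fe_dir_asc hd hx1 hxn hn hxe' hasc
        have : a x < a y := chain_asc_lt y hxy (fun j h1 h2 => hchain j h1 (by omega))
        linarith
      · obtain ⟨hmin', -⟩ := fe_dir_desc hd hx1 hxn hn hxe' hdesc
        exact not_max_of_min hmin' hmax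
  · have hmin : LocalMinAt a n e := heext.resolve_left hmax
    have hBx : Bb a n true x = psi a n x + 1 := by
      simp only [Bb, if_true, if_pos (show LocalMinAt a n (fe a n x) from hmin)]
    rcases Nat.lt_or_ge e y with hey | hey
    · have hdrop := psi_drop1 hemem hxe hey
      have hBy : Bb a n false y ≤ psi a n y + 1 := Bb_le _ _
      omega
    · have h2 : e ≤ fe a n y := by
        rw [he]
        exact fe_le (fe_spec hd hyn hn).1 (by have := fe_ge hd hyn hn; omega)
      have hfeq : fe a n y = e := le_antisymm (fe_le hemem hey) h2
      have hple : psi a n y ≤ psi a n x := psi_mono (by omega)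
      have hpge : psi a n x ≤ psi a n y := by
        apply Finset.card_le_card
        intro z hz
        have hz' := Finset.mem_filter.mp hz
        refine Finset.mem_filter.mpr ⟨hz'.1, ?_⟩
        have h3 : fe a n x ≤ z := fe_le hz'.1 hz'.2
        omega
      have hBy : Bb a n false y = psi a n y := by
        have hny : ¬ LocalMaxAt a n (fe a n y) := by rw [hfeq]; exact hmax
        simp only [Bb, Bool.false_eq_true, if_false, if_neg hny, add_zero]
      omega

lemma step_low (hd : HD a n) {x y : ℕ} (hx1 : 1 ≤ x) (hyn : y ≤ n) (hxy : x < y)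
    (hv : a x < a y) : 1 + Bb a n true y ≤ Bb a n false x := by
  have hn : 1 ≤ n := by omega
  have hxn : x ≤ n := by omega
  have hy1 : 1 ≤ y := by omega
  set e := fe a n x with he
  have heext := fe_ext hd hxn hn
  have hebd := fe_bounds hd hxn hn
  have hemem := (fe_spec hd hxn hn).1
  have hxe : x ≤ e := fe_ge hd hxn hn
  by_cases hmin : LocalMinAt a n e
  · have hBx : Bb a n false x = psi a n x := by
      have h1 : ¬ LocalMaxAt a n (fe a n x) := not_max_of_min hmin
      simp only [Bb, Bool.false_eq_true, if_false, if_neg h1, add_zero]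
    rcases Nat.lt_or_ge e y with hey | hey
    · by_cases hfy : LocalMinAt a n (fe a n y)
      · obtain ⟨m, hmmem, hmmax, hem, hmy⟩ := max_between hd hebd.1 hmin hey hyn hfy
        have hdrop := psi_drop2 hemem hmmem hxe (by omega) hey hmy (by omega)
        have hBy : Bb a n true y ≤ psi a n y + 1 := Bb_le _ _
        omega
      · have hdrop := psi_drop1 hemem hxe hey
        have hBy : Bb a n true y = psi a n y := by
          simp only [Bb, if_true, if_neg hfy, add_zero]
        omega
    · exfalso
      have hxe' : x < e := by omega
      rcases tri hd (i := x) (j := x + 1) hx1 hxn (by omega) (by omega) (by omega)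
        with hasc | hdesc
      · obtain ⟨hmax', -⟩ := fe_dir_asc hd hx1 hxn hn hxe' hasc
        exact not_max_of_min hmin hmax'
      · obtain ⟨-, hchain⟩ := fe_dir_desc hd hx1 hxn hn hxe' hdesc
        have : a y < a x := chain_desc_lt y hxy (fun j h1 h2 => hchain j h1 (by omega))
        linarith
  · have hmax : LocalMaxAt a n e := heext.resolve_right hmin
    have hBx : Bb a n false x = psi a n x + 1 := by
      simp only [Bb, Bool.false_eq_true, if_false, if_pos (show LocalMaxAt a n (fe a n x) from hmax)]
    rcases Nat.lt_or_ge e y with hey | hey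
    · have hdrop := psi_drop1 hemem hxe hey
      have hBy : Bb a n true y ≤ psi a n y + 1 := Bb_le _ _
      omega
    · have h2 : e ≤ fe a n y := by
        rw [he]
        exact fe_le (fe_spec hd hyn hn).1 (by have := fe_ge hd hyn hn; omega)
      have hfeq : fe a n y = e := le_antisymm (fe_le hemem hey) h2
      have hple : psi a n y ≤ psi a n x := psi_mono (by omega)
      have hpge : psi a n x ≤ psi a n y := by
        apply Finset.card_le_card
        intro z hz
        have hz' := Finset.mem_filter.mp hz
        refine Finset.mem_filter.mpr ⟨hz'.1, ?_⟩
        have h3 : fe a n x ≤ z := fe_le hz'.1 hz'.2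
        omega
      have hBy : Bb a n true y = psi a n y := by
        have hny : ¬ LocalMinAt a n (fe a n y) := by rw [hfeq]; exact hmin
        simp only [Bb, if_true, if_neg hny, add_zero]
      omega

lemma B_mono (hd : HD a n) {i x : ℕ} (hi1 : 1 ≤ i) (hix : i ≤ x) (hxn : x ≤ n)
    (b : Bool) : Bb a n b x ≤ Bb a n b i := by
  have hn : 1 ≤ n := by omega
  have hin : i ≤ n := by omega
  have hlei : fe a n i ≤ fe a n x :=
    fe_le (fe_spec hd hxn hn).1 (le_trans hix (fe_ge hd hxn hn))
  rcases eq_or_lt_of_le hlei with heq | hlt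
  · have h1 := psi_mono (a := a) (n := n) hix
    simp only [Bb, ← heq]
    exact Nat.add_le_add_right h1 _
  · have hfx : fe a n i < x := by
      by_contra hc
      push_neg at hc
      have := fe_le (i := x) (fe_spec hd hin hn).1 hc
      omega
    have hdrop := psi_drop1 (fe_spec hd hin hn).1 (fe_ge hd hin hn) hfx
    have h1 : Bb a n b x ≤ psi a n x + 1 := Bb_le _ _
    have h2 : psi a n i ≤ Bb a n b i := psi_le_Bb _ _
    omega

lemma B_pos (hd : HD a n) {i : ℕ} (hin : i ≤ n) (hn : 1 ≤ n) (b : Bool) :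
    1 ≤ Bb a n b i := by
  have h1 := psi_pos hd hin hn
  have h2 := psi_le_Bb (a := a) (n := n) b i
  omega


/-! ### Alternating lists with a phase -/

lemma isAltB_true_iff {l : List ℝ} : IsAltB true l ↔ IsAltList l := by
  constructor <;> intro h i hi <;> have h' := h i hi <;> by_cases hp : i % 2 = 0
  · rw [if_pos hp]
    rwa [if_pos (by simp [hp])] at h'
  · rw [if_neg hp]
    rwa [if_neg (by simp [hp])] at h'
  · rw [if_pos (by simp [hp])]
    rwa [if_pos hp] at h'
  · rw [if_neg (by simp [hp])]
    rwa [if_neg hp] at h'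

lemma isAltB_tail {b : Bool} {x : ℝ} {l : List ℝ} (h : IsAltB b (x :: l)) :
    IsAltB (!b) l := by
  intro i hi
  have h' := h (i+1) (by simpa using Nat.succ_lt_succ hi)
  simp only [List.getElem_cons_succ] at h'
  by_cases hp : i % 2 = 0
  · have hp2 : ¬ ((i+1) % 2 = 0) := by omega
    cases b
    · rw [if_pos (by simp [hp])]
      rwa [if_pos (by simp [hp2])] at h'
    · rw [if_neg (by simp [hp])]
      rwa [if_neg (by simp [hp2])] at h'
  · have hp2 : (i+1) % 2 = 0 := by omega
    cases b
    · rw [if_neg (by simp [hp])]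
      rwa [if_neg (by simp [hp2])] at h'
    · rw [if_pos (by simp [hp])]
      rwa [if_pos (by simp [hp2])] at h'

/-- Key induction: an alternating list of phase `b` with indices in `[i, n]`
has length at most `Bb b i`. -/
lemma key (hd : HD a n) : ∀ l : List ℕ, ∀ b : Bool, ∀ i : ℕ, 1 ≤ i → i ≤ n →
    l.Chain' (· < ·) → (∀ j ∈ l, j ∈ Finset.Icc 1 n ∧ i ≤ j) →
    IsAltB b (l.map a) → l.length ≤ Bb a n b i := by
  intro l
  induction l with
  | nil =>
    intro b i _ _ _ _ _
    simp
  | cons x xs ih =>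
    intro b i hi1 hin hc hm halt
    have hx := hm x (by simp)
    have hxI := Finset.mem_Icc.mp hx.1
    cases xs with
    | nil =>
      simpa using B_pos hd hin (by omega) b
    | cons y rest =>
      have hy := hm y (by simp)
      have hyI := Finset.mem_Icc.mp hy.1
      have hxy : x < y := (List.isChain_cons_cons.mp hc).1
      have hc' : (y :: rest).Chain' (· < ·) := (List.isChain_cons_cons.mp hc).2
      have htail : IsAltB (!b) ((y :: rest).map a) := by
        rw [List.map_cons] at halt
        exact isAltB_tail halt
      have hpw := List.isChain_iff_pairwise.mp hc'
      have hyrest : ∀ j ∈ rest, y < j := (List.pairwise_cons.mp hpw).1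
      have hmm : ∀ j ∈ y :: rest, j ∈ Finset.Icc 1 n ∧ y ≤ j := by
        intro j hj
        refine ⟨(hm j (by simp [hj])).1, ?_⟩
        rcases List.mem_cons.mp hj with h | h
        · omega
        · exact le_of_lt (hyrest j h)
      have hIH := ih (!b) y hyI.1 hyI.2 hc' hmm htail
      have h0 := halt 0 (by simp)
      simp only [List.map_cons, List.getElem_cons_zero, List.getElem_cons_succ] at h0
      cases b
      · rw [if_neg (by simp)] at h0
        have hstep := step_low hd hxI.1 hyI.2 hxy h0
        have hmono := B_mono hd hi1 hx.2 hxI.2 false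
        simp only [Bool.not_false] at hIH
        simp only [List.length_cons] at hIH ⊢
        omega
      · rw [if_pos (by simp)] at h0
        have hstep := step_high hd hxI.1 hyI.2 hxy h0
        have hmono := B_mono hd hi1 hx.2 hxI.2 true
        simp only [Bool.not_true] at hIH
        simp only [List.length_cons] at hIH ⊢
        omega


/-! ### The lower bound: the sorted list of extrema is alternating -/

lemma first_max (hd : HD a n) (hn : 1 ≤ n) : LocalMaxAt a n (fe a n 1) := by
  rcases fe_ext hd hn hn with hmx | hmn
  · exact hmx
  · exfalso
    set e := fe a n 1 with he
    have hbd := fe_bounds hd (show (1:ℕ) ≤ n from hn) hn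
    have h1 : 1 < e := hmn.2.2
    have h2 : a e < a (e-1) := hmn.2.1
    obtain ⟨k, hk1, hk2, hk3⟩ := exists_max hd (j := e - 1) (by omega) (by omega)
      (by rw [show e-1+1 = e by omega]; exact h2)
    have : e ≤ k := fe_le (mem_extSet hk1 (by omega) (Or.inl hk3)) (by omega)
    omega

lemma sort_pairwise : ∀ i j : ℕ, ∀ hi : i < ((extSet a n).sort (· ≤ ·)).length,
    ∀ hj : j < ((extSet a n).sort (· ≤ ·)).length, i < j →
    ((extSet a n).sort (· ≤ ·))[i] < ((extSet a n).sort (· ≤ ·))[j] := by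
  have h := (Finset.sortedLT_sort (extSet a n)).pairwise
  intro i j hi hj hij
  exact List.pairwise_iff_getElem.mp h i j hi hj hij

lemma sort_mem_extSet {i : ℕ} (hi : i < ((extSet a n).sort (· ≤ ·)).length) :
    ((extSet a n).sort (· ≤ ·))[i] ∈ extSet a n :=
  (Finset.mem_sort (· ≤ ·)).mp (List.getElem_mem hi)

lemma sort_gap {i : ℕ} (hi : i + 1 < ((extSet a n).sort (· ≤ ·)).length) :
    ∀ k, ((extSet a n).sort (· ≤ ·))[i]'(by omega) < k →
      k < ((extSet a n).sort (· ≤ ·))[i+1]'hi → ¬ ExtAt a n k := by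
  intro k hk1 hk2 hc
  have hb1 := extSet_bounds (sort_mem_extSet (n := n) (a := a) (by omega : i < _))
  have hb2 := extSet_bounds (sort_mem_extSet (n := n) (a := a) hi)
  have hkmem : k ∈ extSet a n := mem_extSet (by omega) (by omega) hc
  have hkl : k ∈ (extSet a n).sort (· ≤ ·) := (Finset.mem_sort (· ≤ ·)).mpr hkmem
  obtain ⟨j, hj, hjk⟩ := List.mem_iff_getElem.mp hkl
  rcases Nat.lt_or_ge j (i+1) with h | h
  · rcases Nat.lt_or_ge j i with h' | h'
    · have := sort_pairwise j i hj (by omega) h'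
      omega
    · have : j = i := by omega
      subst this
      omega
  · rcases Nat.lt_or_ge (i+1) j with h' | h'
    · have := sort_pairwise (i+1) j hi hj h'
      omega
    · have : j = i + 1 := by omega
      subst this
      omega

lemma sort_head (hd : HD a n) (hn : 1 ≤ n)
    (h0 : 0 < ((extSet a n).sort (· ≤ ·)).length) :
    ((extSet a n).sort (· ≤ ·))[0] = fe a n 1 := by
  have hmem := sort_mem_extSet (n := n) (a := a) h0
  have hb := extSet_bounds hmem
  have h1 : fe a n 1 ≤ ((extSet a n).sort (· ≤ ·))[0] := fe_le hmem hb.1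
  have hfmem : fe a n 1 ∈ (extSet a n).sort (· ≤ ·) :=
    (Finset.mem_sort (· ≤ ·)).mpr (fe_spec hd hn hn).1
  obtain ⟨j, hj, hjk⟩ := List.mem_iff_getElem.mp hfmem
  rcases Nat.eq_zero_or_pos j with hj0 | hj0
  · subst hj0; omega
  · have := sort_pairwise 0 j h0 hj hj0
    omega

lemma sort_alt (hd : HD a n) (hn : 1 ≤ n) :
    ∀ i : ℕ, ∀ hi : i < ((extSet a n).sort (· ≤ ·)).length,
    (i % 2 = 0 → LocalMaxAt a n (((extSet a n).sort (· ≤ ·))[i])) ∧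
    (i % 2 = 1 → LocalMinAt a n (((extSet a n).sort (· ≤ ·))[i])) := by
  intro i
  induction i with
  | zero =>
    intro hi
    refine ⟨fun _ => ?_, fun h => by omega⟩
    rw [sort_head hd hn hi]
    exact first_max hd hn
  | succ i ih =>
    intro hi
    have hprev := ih (by omega)
    have hb1 := extSet_bounds (sort_mem_extSet (n := n) (a := a) (by omega : i < _))
    have hb2 := extSet_bounds (sort_mem_extSet (n := n) (a := a) hi)
    have hlt := sort_pairwise i (i+1) (by omega) hi (by omega)
    have hext' := extSet_prop (sort_mem_extSet (n := n) (a := a) hi)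
    by_cases hp : i % 2 = 0
    · have hmx := hprev.1 hp
      have := (consec_max hd hb1.1 hmx hext' hlt hb2.2 (sort_gap hi)).1
      exact ⟨fun h => by omega, fun _ => this⟩
    · have hmn := hprev.2 (by omega)
      have := (consec_min hd hb1.1 hmn hext' hlt hb2.2 (sort_gap hi)).1
      exact ⟨fun _ => this, fun h => by omega⟩

lemma sort_isAltList (hd : HD a n) (hn : 1 ≤ n) :
    IsAltList (((extSet a n).sort (· ≤ ·)).map a) := by
  intro i hi
  simp only [List.length_map] at hi
  have hb1 := extSet_bounds (sort_mem_extSet (n := n) (a := a) (by omega : i < _))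
  have hb2 := extSet_bounds (sort_mem_extSet (n := n) (a := a) hi)
  have hlt := sort_pairwise i (i+1) (by omega) hi (by omega)
  have hext' := extSet_prop (sort_mem_extSet (n := n) (a := a) hi)
  have halt := sort_alt hd hn i (by omega)
  by_cases hp : i % 2 = 0
  · rw [if_pos hp]
    have hmx := halt.1 hp
    have := (consec_max hd hb1.1 hmx hext' hlt hb2.2 (sort_gap hi)).2
    simpa using this
  · rw [if_neg hp]
    have hmn := halt.2 (by omega)
    have := (consec_min hd hb1.1 hmn hext' hlt hb2.2 (sort_gap hi)).2
    simpa using this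

/-! ### Length bound -/

lemma len_le {l : List ℕ} {s : Finset ℕ} (hc : l.Chain' (· < ·))
    (hm : ∀ j ∈ l, j ∈ s) : l.length ≤ s.card := by
  have hp : l.Pairwise (· < ·) := List.isChain_iff_pairwise.mp hc
  have hnd : l.Nodup := hp.imp Nat.ne_of_lt
  calc l.length = l.toFinset.card := (List.toFinset_card_of_nodup hnd).symm
    _ ≤ s.card := Finset.card_le_card (fun x hx => hm x (List.mem_toFinset.mp hx))

end lemmas

/-- for a sequence `(a 1, …, a n) ∈ [0,1]ⁿ` with pairwise distinct
entries, `LAₙ(a)` equals the number of local maxima plus the number of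
local minima of `a`. -/
theorem stmt3 (n : ℕ) (a : ℕ → ℝ)
    (hrange : ∀ i ∈ Finset.Icc 1 n, a i ∈ Set.Icc (0 : ℝ) 1)
    (hdist : ∀ i ∈ Finset.Icc 1 n, ∀ j ∈ Finset.Icc 1 n, a i = a j → i = j) :
    LAon a (Finset.Icc 1 n)
      = ((Finset.Icc 1 n).filter (LocalMaxAt a n)).card
        + ((Finset.Icc 1 n).filter (LocalMinAt a n)).card := by
  have hd : HD a n := hdist
  have hzero : (0 : ℕ) ∈ {m | ∃ l : List ℕ, l.length = m ∧ l.Chain' (· < ·) ∧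
      (∀ i ∈ l, i ∈ Finset.Icc 1 n) ∧ IsAltList (l.map a)} :=
    ⟨[], rfl, List.isChain_nil, fun i hi => by simp at hi, fun i hi => by simp at hi⟩
  rcases Nat.eq_zero_or_pos n with hn0 | hn
  · subst hn0
    have hempty : Finset.Icc 1 0 = (∅ : Finset ℕ) := by simp
    have hL : LAon a (Finset.Icc 1 0) = 0 := by
      apply le_antisymm
      · apply csSup_le ⟨0, hzero⟩
        rintro m ⟨l, hlen, -, hmem, -⟩
        cases l with
        | nil => simp at hlen; omega
        | cons x xs =>
          have := hmem x (by simp)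
          simp at this
      · exact Nat.zero_le _
    rw [hL, hempty]
    simp
  · have hEq : ((Finset.Icc 1 n).filter (LocalMaxAt a n)).card
        + ((Finset.Icc 1 n).filter (LocalMinAt a n)).card = (extSet a n).card := by
      have hdisj : Disjoint ((Finset.Icc 1 n).filter (LocalMaxAt a n))
          ((Finset.Icc 1 n).filter (LocalMinAt a n)) := by
        rw [Finset.disjoint_left]
        intro k hk1 hk2
        exact not_max_of_min (Finset.mem_filter.mp hk2).2 (Finset.mem_filter.mp hk1).2
      rw [← Finset.card_union_of_disjoint hdisj, ← Finset.filter_or, extSet]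
      congr 1
      apply Finset.filter_congr
      intro x _
      exact Iff.rfl
    rw [hEq]
    apply le_antisymm
    · apply csSup_le ⟨0, hzero⟩
      rintro m ⟨l, hlen, hch, hmem, halt⟩
      have hB := key hd l true 1 le_rfl hn hch
        (fun j hj => ⟨hmem j hj, (Finset.mem_Icc.mp (hmem j hj)).1⟩)
        (isAltB_true_iff.mpr halt)
      have h1 : ¬ LocalMinAt a n (fe a n 1) := fun hc => not_max_of_min hc (first_max hd hn)
      have hBB : Bb a n true 1 = psi a n 1 := by
        simp only [Bb, if_true, if_neg h1, add_zero]
      have hpsi : psi a n 1 = (extSet a n).card := by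
        unfold psi
        congr 1
        apply Finset.filter_true_of_mem
        intro e he
        exact (extSet_bounds he).1
      omega
    · apply le_csSup
      · refine ⟨n, ?_⟩
        rintro m ⟨l, hlen, hch, hmem, -⟩
        have := len_le hch hmem
        rw [hlen, Nat.card_Icc] at this
        omega
      · refine ⟨(extSet a n).sort (· ≤ ·), Finset.length_sort _, ?_, ?_, sort_isAltList hd hn⟩
        · exact List.isChain_iff_pairwise.mpr (Finset.sortedLT_sort _).pairwise
        · intro i hi
          have : i ∈ extSet a n := (Finset.mem_sort (· ≤ ·)).mp hi
          simp only [extSet, Finset.mem_filter] at this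
          exact this.1

end
end

section
/- Let a₁, a₂, … be i.i.d. random variables uniformly distributed on [0,1], and let LAₙ be the length of the longest alternating subsequence of (a₁,…,aₙ). Then LAₙ/n converges almost surely to 2/3 as n → ∞. -/
open MeasureTheory ProbabilityTheory Filter Finset Topology

noncomputable section

/-- The set of change points. -/
def chSet (b : ℕ → ℝ) (n : ℕ) : Finset ℕ :=
  (Finset.Icc 1 (n-2)).filter (fun i => ¬ (b (i+1) < b i ↔ b (i+2) < b (i+1)))

lemma run_le (b : ℕ → ℝ) (p : ℕ) : ∀ q, p ≤ q →
    (∀ k, p ≤ k → k < q → b k ≤ b (k+1)) → b p ≤ b q := by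
  intro q
  induction q with
  | zero =>
    intro h _
    obtain rfl : p = 0 := Nat.le_zero.1 h
    exact le_rfl
  | succ q ih =>
    intro hpq h
    rcases Nat.lt_or_ge p (q+1) with h' | h'
    · have hpq' : p ≤ q := by omega
      exact le_trans (ih hpq' (fun k hk hk' => h k hk (by omega)))
        (h q (by omega) (by omega))
    · obtain rfl : p = q + 1 := by omega
      exact le_rfl

lemma run_ge (b : ℕ → ℝ) (p : ℕ) (q : ℕ) (hpq : p ≤ q)
    (h : ∀ k, p ≤ k → k < q → b (k+1) ≤ b k) : b q ≤ b p := by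
  have := run_le (fun k => -(b k)) p q hpq (fun k hk hk' => by
    simpa using h k hk hk')
  simpa using this

lemma iff_run (D : ℕ → Prop) (p : ℕ) : ∀ q, p ≤ q →
    (∀ k, p ≤ k → k < q → (D k ↔ D (k+1))) → (D p ↔ D q) := by
  intro q
  induction q with
  | zero =>
    intro h _
    obtain rfl : p = 0 := Nat.le_zero.1 h
    exact Iff.rfl
  | succ q ih =>
    intro hpq h
    rcases Nat.lt_or_ge p (q+1) with h' | h'
    · have hpq' : p ≤ q := by omega
      exact (ih hpq' (fun k hk hk' => h k hk (by omega))).trans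
        (h q (by omega) (by omega))
    · obtain rfl : p = q + 1 := by omega
      exact Iff.rfl

lemma LAon_set_bound (b : ℕ → ℝ) (n : ℕ) (m : ℕ)
    (hm : m ∈ {m | ∃ l : List ℕ, l.length = m ∧ l.Chain' (· < ·) ∧
      (∀ i ∈ l, i ∈ Finset.Icc 1 n) ∧ IsAltList (l.map b)}) : m ≤ n := by
  obtain ⟨l, hlen, hchain, hmem, -⟩ := hm
  have hnd : l.Nodup := ((List.isChain_iff_pairwise).1 hchain).imp ne_of_lt
  have hsub : l.toFinset ⊆ Finset.Icc 1 n := by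
    intro i hi
    exact hmem i (List.mem_toFinset.1 hi)
  have := Finset.card_le_card hsub
  rw [List.toFinset_card_of_nodup hnd, hlen] at this
  simpa [Nat.card_Icc] using this

lemma LAon_set_nonempty (b : ℕ → ℝ) (n : ℕ) :
    (0 : ℕ) ∈ {m | ∃ l : List ℕ, l.length = m ∧ l.Chain' (· < ·) ∧
      (∀ i ∈ l, i ∈ Finset.Icc 1 n) ∧ IsAltList (l.map b)} :=
  ⟨[], rfl, List.isChain_nil, by simp, fun i h => absurd h (by simp)⟩

lemma LAon_upper (b : ℕ → ℝ) (n : ℕ) :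
    LAon b (Finset.Icc 1 n) ≤ (chSet b n).card + 2 := by
  apply csSup_le ⟨0, LAon_set_nonempty b n⟩
  rintro m ⟨l, hlen, hchain, hmem, halt⟩
  set L := l.length with hL
  -- accessor
  set e : ℕ → ℕ := fun j => l.getD j 0 with he
  have hget : ∀ j (h : j < L), e j = l[j]'h := fun j h => List.getD_eq_getElem l 0 h
  have emono : ∀ {j j'}, j < j' → j' < L → e j < e j' := by
    intro j j' hjj' hj'
    rw [hget j (by omega), hget j' hj']
    exact List.pairwise_iff_get.1 ((List.isChain_iff_pairwise).1 hchain)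
      ⟨j, by omega⟩ ⟨j', hj'⟩ hjj'
  have emem : ∀ j, j < L → e j ∈ Finset.Icc 1 n := by
    intro j hj
    rw [hget j hj]
    exact hmem _ (l.getElem_mem hj)
  have halt' : ∀ j (h : j + 1 < L),
      if j % 2 = 0 then b (e (j+1)) < b (e j) else b (e j) < b (e (j+1)) := by
    intro j h
    have h2 : j + 1 < (l.map b).length := by simpa using h
    have := halt j h2
    rw [List.getElem_map, List.getElem_map] at this
    rwa [hget j (by omega), hget (j+1) h]
  -- step 2: a witness of the correct slope between consecutive picks
  have hex : ∀ j, j + 1 < L → ∃ k, e j ≤ k ∧ k < e (j+1) ∧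
      ((b (k+1) < b k) ↔ j % 2 = 0) := by
    intro j h
    have hlt := emono (Nat.lt_succ_self j) h
    rcases Nat.mod_two_eq_zero_or_one j with hp | hp
    · -- descent needed
      have hdesc : ∃ k, e j ≤ k ∧ k < e (j+1) ∧ b (k+1) < b k := by
        by_contra hcon
        have hmono : ∀ k, e j ≤ k → k < e (j+1) → b k ≤ b (k+1) := by
          intro k hk hk'
          by_contra hbk
          push_neg at hbk
          exact hcon ⟨k, hk, hk', hbk⟩
        have h1 := run_le b (e j) (e (j+1)) (le_of_lt hlt) hmono
        have h2 := halt' j h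
        rw [if_pos hp] at h2
        linarith
      obtain ⟨k, hk1, hk2, hk3⟩ := hdesc
      exact ⟨k, hk1, hk2, iff_of_true hk3 hp⟩
    · have hasc : ∃ k, e j ≤ k ∧ k < e (j+1) ∧ ¬ (b (k+1) < b k) := by
        by_contra hcon
        have hmono : ∀ k, e j ≤ k → k < e (j+1) → b (k+1) ≤ b k := by
          intro k hk hk'
          by_contra hbk
          push_neg at hbk
          exact hcon ⟨k, hk, hk', not_lt.2 (le_of_lt hbk)⟩
        have h1 := run_ge b (e j) (e (j+1)) (le_of_lt hlt) hmono
        have h2 := halt' j h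
        rw [if_neg (by omega)] at h2
        linarith
      obtain ⟨k, hk1, hk2, hk3⟩ := hasc
      exact ⟨k, hk1, hk2, iff_of_false hk3 (by omega)⟩
  classical
  set k' : ℕ → ℕ := fun j => if h : j + 1 < L then (hex j h).choose else 0 with hk'
  have k'spec : ∀ j (h : j + 1 < L), e j ≤ k' j ∧ k' j < e (j+1) ∧
      ((b (k' j + 1) < b (k' j)) ↔ j % 2 = 0) := by
    intro j h
    simp only [hk', dif_pos h]
    exact (hex j h).choose_spec
  have hcex : ∀ j, j + 2 < L → ∃ c, k' j ≤ c ∧ c < k' (j+1) ∧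
      ¬ (b (c+1) < b c ↔ b (c+2) < b (c+1)) := by
    intro j h
    obtain ⟨h1, h2, h3⟩ := k'spec j (by omega)
    obtain ⟨h4, h5, h6⟩ := k'spec (j+1) h
    have hle : k' j ≤ k' (j+1) := le_trans (le_of_lt h2) h4
    by_contra hcon
    have hstep : ∀ c, k' j ≤ c → c < k' (j+1) →
        ((b (c+1) < b c) ↔ (b (c+2) < b (c+1))) := by
      intro c hc hc'
      by_contra hbc
      exact hcon ⟨c, hc, hc', hbc⟩
    have key := iff_run (fun c => b (c+1) < b c) (k' j) (k' (j+1)) hle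
      (fun c hc hc' => hstep c hc hc')
    rcases Nat.mod_two_eq_zero_or_one j with hp | hp
    · have hp1 : (j+1) % 2 = 1 := by omega
      have hD1 : b (k' j + 1) < b (k' j) := h3.2 hp
      have hD2 := key.1 hD1
      have := h6.1 hD2
      omega
    · have hp1 : (j+1) % 2 = 0 := by omega
      have hD2 : b (k' (j+1) + 1) < b (k' (j+1)) := h6.2 hp1
      have hD1 := key.2 hD2
      have := h3.1 hD1
      omega
  set c' : ℕ → ℕ := fun j => if h : j + 2 < L then (hcex j h).choose else 0 with hc'
  have c'spec : ∀ j (h : j + 2 < L), k' j ≤ c' j ∧ c' j < k' (j+1) ∧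
      ¬ (b (c' j + 1) < b (c' j) ↔ b (c' j + 2) < b (c' j + 1)) := by
    intro j h
    simp only [hc', dif_pos h]
    exact (hcex j h).choose_spec
  have cmem : ∀ j, j + 2 < L → c' j ∈ chSet b n := by
    intro j h
    obtain ⟨h1, h2, h3⟩ := c'spec j h
    obtain ⟨h4, h5, -⟩ := k'spec j (by omega)
    obtain ⟨h6, h7, -⟩ := k'spec (j+1) h
    rw [show j+1+1 = j+2 from by omega] at h7
    have he1 : 1 ≤ e j := by
      have := emem j (by omega); simp [Finset.mem_Icc] at this; omega
    have he2 : e (j+2) ≤ n := by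
      have := emem (j+2) h; simp [Finset.mem_Icc] at this; omega
    refine Finset.mem_filter.2 ⟨Finset.mem_Icc.2 ⟨by omega, by omega⟩, h3⟩
  have cmono : ∀ j j', j < j' → j' + 2 < L → c' j < c' j' := by
    intro j j' hjj' hj'
    obtain ⟨h1, h2, -⟩ := c'spec j (by omega)
    obtain ⟨h4, h5, -⟩ := c'spec j' hj'
    obtain ⟨h6, h7, -⟩ := k'spec (j+1) (by omega)
    obtain ⟨h8, h9, -⟩ := k'spec j' (by omega)
    rw [show j+1+1 = j+2 from by omega] at h7
    rcases Nat.eq_or_lt_of_le (by omega : j + 1 ≤ j') with h' | h'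
    · obtain rfl : j' = j + 1 := by omega
      omega
    · have hee : e (j+2) ≤ e j' := by
        rcases Nat.eq_or_lt_of_le (by omega : j + 2 ≤ j') with h'' | h''
        · obtain rfl : j' = j + 2 := by omega
          exact le_rfl
        · exact le_of_lt (emono h'' (by omega))
      omega
  have hcard : L - 2 ≤ (chSet b n).card := by
    have := Finset.card_le_card_of_injOn (s := Finset.range (L-2))
      (t := chSet b n) c'
      (fun j hj => cmem j (by simp only [Finset.coe_range, Set.mem_Iio] at hj; omega))
      (fun x hx y hy hxy => by
        simp only [Finset.coe_range, Set.mem_Iio] at hx hy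
        by_contra hne
        rcases Nat.lt_or_ge x y with h' | h'
        · exact absurd hxy (ne_of_lt (cmono x y h' (by omega)))
        · exact absurd hxy.symm (ne_of_lt (cmono y x (by omega) (by omega))))
    simpa using this
  omega

lemma LAon_lower (b : ℕ → ℝ) (hinj : ∀ i j : ℕ, i ≠ j → b i ≠ b j) (n : ℕ) :
    (chSet b n).card - 1 ≤ LAon b (Finset.Icc 1 n) := by
  classical
  set C := (chSet b n).card with hC
  set σ := (chSet b n).orderEmbOfFin hC.symm with hσ
  set cc : ℕ → ℕ := fun t => if h : t < C then σ ⟨t, h⟩ else 0 with hcc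
  have ccmem : ∀ t, t < C → cc t ∈ chSet b n := by
    intro t h
    simp only [hcc, dif_pos h]
    exact Finset.orderEmbOfFin_mem _ _ _
  have ccmono : ∀ t t', t < t' → t' < C → cc t < cc t' := by
    intro t t' h h'
    simp only [hcc, dif_pos h', dif_pos (lt_trans h h')]
    exact σ.strictMono (by exact h)
  have ccIcc : ∀ t, t < C → 1 ≤ cc t ∧ cc t ≤ n - 2 := by
    intro t h
    have := ccmem t h
    simp only [chSet, Finset.mem_filter, Finset.mem_Icc] at this
    exact this.1
  have ccch : ∀ t, t < C → ¬ (b (cc t + 1) < b (cc t) ↔ b (cc t + 2) < b (cc t + 1)) := by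
    intro t h
    have := ccmem t h
    simp only [chSet, Finset.mem_filter] at this
    exact this.2
  have gap : ∀ t, t + 1 < C → ∀ j, cc t < j → j < cc (t+1) → j ∉ chSet b n := by
    intro t h j hj hj' hmem
    have : ∃ u : Fin C, σ u = j := by
      have : j ∈ Set.range σ := by
        rw [Finset.range_orderEmbOfFin]
        exact hmem
      exact this
    obtain ⟨u, hu⟩ := this
    have h1 : cc t < σ u := hu ▸ hj
    have h2 : σ u < cc (t+1) := hu ▸ hj'
    simp only [hcc, dif_pos (by omega : t < C), dif_pos h] at h1 h2
    have l1 : (⟨t, by omega⟩ : Fin C) < u := σ.lt_iff_lt.1 h1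
    have l2 : u < (⟨t+1, h⟩ : Fin C) := σ.lt_iff_lt.1 h2
    simp only [Fin.lt_def] at l1 l2
    omega
  -- Dp is constant on the run between consecutive change points
  have const : ∀ t, t + 1 < C → ∀ k, cc t + 1 ≤ k → k ≤ cc (t+1) →
      ((b (k+1) < b k) ↔ (b (cc t + 1 + 1) < b (cc t + 1))) := by
    intro t h k hk hk'
    have := iff_run (fun i => b (i+1) < b i) (cc t + 1) k hk ?_
    · exact this.symm
    · intro k' hk1 hk2
      have hk'n : k' ∉ chSet b n := gap t h k' (by omega) (by omega)
      have h1 := (ccIcc t (by omega)).1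
      have h2 := (ccIcc (t+1) h).2
      simp only [chSet, Finset.mem_filter, Finset.mem_Icc, not_and] at hk'n
      have := hk'n ⟨by omega, by omega⟩
      tauto
  -- types alternate
  have alt : ∀ t, t + 1 < C →
      ((b (cc (t+1) + 1 + 1) < b (cc (t+1) + 1)) ↔
        ¬ (b (cc t + 1 + 1) < b (cc t + 1))) := by
    intro t h
    have hlt := ccmono t (t+1) (Nat.lt_succ_self t) h
    have h1 := const t h (cc (t+1)) (by omega) le_rfl
    have h2 := ccch (t+1) h
    constructor
    · intro hd hD
      exact h2 (iff_of_true (h1.2 hD) hd)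
    · intro hD
      by_contra hd
      exact h2 (iff_of_false (fun hx => hD (h1.1 hx)) hd)
  -- value steps
  have step : ∀ t, t + 1 < C →
      (((b (cc t + 1 + 1) < b (cc t + 1)) → b (cc (t+1) + 1) < b (cc t + 1)) ∧
       ((¬ (b (cc t + 1 + 1) < b (cc t + 1))) → b (cc t + 1) < b (cc (t+1) + 1))) := by
    intro t h
    have hlt := ccmono t (t+1) (Nat.lt_succ_self t) h
    constructor
    · intro hD
      have hle : b (cc (t+1) + 1) ≤ b (cc t + 1) := by
        apply run_ge b (cc t + 1) (cc (t+1) + 1) (by omega)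
        intro k hk hk'
        exact le_of_lt ((const t h k hk (by omega)).2 hD)
      exact lt_of_le_of_ne hle (hinj _ _ (by omega))
    · intro hD
      have hle : b (cc t + 1) ≤ b (cc (t+1) + 1) := by
        apply run_le b (cc t + 1) (cc (t+1) + 1) (by omega)
        intro k hk hk'
        exact not_lt.1 (fun hx => hD ((const t h k hk (by omega)).1 hx))
      exact lt_of_le_of_ne hle (hinj _ _ (by omega))
  have main : ∀ off : ℕ, off ≤ 1 →
      (∀ _ : off < C, b (cc off + 1 + 1) < b (cc off + 1)) →
      (C - off) ∈ {m | ∃ l : List ℕ, l.length = m ∧ l.Chain' (· < ·) ∧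
        (∀ i ∈ l, i ∈ Finset.Icc 1 n) ∧ IsAltList (l.map b)} := by
    intro off hoff hQ
    have par : ∀ i, i + off < C →
        ((b (cc (i + off) + 1 + 1) < b (cc (i + off) + 1)) ↔ i % 2 = 0) := by
      intro i
      induction i with
      | zero =>
        intro h
        rw [zero_add]
        exact iff_of_true (hQ (by omega)) (by norm_num)
      | succ i ih =>
        intro h
        have hi : i + off < C := by omega
        have halt := alt (i + off) (by omega)
        rw [show i + 1 + off = (i + off) + 1 from by omega]
        rw [halt, ih hi]
        rcases Nat.mod_two_eq_zero_or_one i with hp | hp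
        · constructor
          · intro h1; exact absurd hp h1
          · intro h1; omega
        · constructor
          · intro _; omega
          · intro h1 h2; omega
    refine ⟨List.ofFn (fun i : Fin (C - off) => cc (i.val + off) + 1), by simp, ?_, ?_, ?_⟩
    · show List.IsChain _ _
      rw [List.isChain_ofFn]
      intro i hi
      show cc (i + off) + 1 < cc ((i + 1) + off) + 1
      have := ccmono (i + off) (i + 1 + off) (by omega) (by omega)
      omega
    · intro x hx
      rw [List.mem_ofFn] at hx
      obtain ⟨i, rfl⟩ := hx
      have hiC : i.val + off < C := by have := i.isLt; omega
      have := ccIcc (i.val + off) hiC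
      show cc (i.val + off) + 1 ∈ Finset.Icc 1 n
      exact Finset.mem_Icc.2 ⟨by omega, by omega⟩
    · intro i h
      simp only [List.length_map, List.length_ofFn] at h
      have e1 : (List.map b (List.ofFn (fun i : Fin (C - off) => cc (i.val + off) + 1)))[i]'(by
          simpa using Nat.lt_of_succ_lt h) = b (cc (i + off) + 1) := by
        rw [List.getElem_map, List.getElem_ofFn]
      have e2 : (List.map b (List.ofFn (fun i : Fin (C - off) => cc (i.val + off) + 1)))[i+1]'(by
          simpa using h) = b (cc ((i + off) + 1) + 1) := by
        rw [List.getElem_map, List.getElem_ofFn]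
        show b (cc ((i+1) + off) + 1) = _
        rw [show (i+1) + off = (i + off) + 1 from by omega]
      have hstep := step (i + off) (by omega)
      have hpar := par i (by omega)
      rcases Nat.mod_two_eq_zero_or_one i with hp | hp
      · rw [if_pos hp, e1, e2]
        exact hstep.1 (hpar.2 hp)
      · rw [if_neg (by omega), e1, e2]
        exact hstep.2 (fun hx => by have := hpar.1 hx; omega)
  have hbdd : BddAbove {m | ∃ l : List ℕ, l.length = m ∧ l.Chain' (· < ·) ∧
      (∀ i ∈ l, i ∈ Finset.Icc 1 n) ∧ IsAltList (l.map b)} :=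
    ⟨n, fun m hm => LAon_set_bound b n m hm⟩
  rcases Nat.eq_zero_or_pos C with hC0 | hC0
  · simp [hC0]
  -- choose the offset
  by_cases hq : b (cc 0 + 1 + 1) < b (cc 0 + 1)
  · have h0 := main 0 (by omega) (fun _ => by simpa using hq)
    have := le_csSup hbdd h0
    simp only [Nat.sub_zero] at this
    calc C - 1 ≤ C := by omega
    _ ≤ LAon b (Finset.Icc 1 n) := this
  · rcases Nat.lt_or_ge 1 C with h1C | h1C
    · have hQ1 : b (cc 1 + 1 + 1) < b (cc 1 + 1) := by
        have := alt 0 h1C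
        rw [show (0:ℕ) + 1 = 1 from rfl] at this
        exact this.2 hq
      have h0 := main 1 le_rfl (fun _ => hQ1)
      exact le_csSup hbdd h0
    · have : C = 1 := by omega
      rw [this]
      exact Nat.zero_le _

lemma aux_ratio (s : ℕ) :
    Tendsto (fun K : ℕ => (K : ℝ) / (3 * K + s)) atTop (𝓝 (1/3)) := by
  have h0 : Tendsto (fun K : ℕ => (3 : ℝ) + s * (1 / K)) atTop (𝓝 3) := by
    have := tendsto_one_div_atTop_nhds_zero_nat.const_mul (s : ℝ)
    simpa using tendsto_const_nhds.add this
  have h1 : Tendsto (fun K : ℕ => ((3 : ℝ) + s * (1 / K))⁻¹) atTop (𝓝 (3 : ℝ)⁻¹) :=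
    h0.inv₀ (by norm_num)
  rw [show (1:ℝ)/3 = (3:ℝ)⁻¹ from by norm_num]
  apply h1.congr'
  filter_upwards [eventually_ge_atTop 1] with K hK
  have hK' : (K : ℝ) ≠ 0 := by positivity
  field_simp

lemma aux_vanish (d : ℝ) (s : ℕ) :
    Tendsto (fun K : ℕ => d / (3 * K + s)) atTop (𝓝 0) := by
  have h2 : Tendsto (fun K : ℕ => (3 * K + s : ℝ)) atTop atTop := by
    apply tendsto_atTop_add_const_right
    exact (tendsto_natCast_atTop_atTop).const_mul_atTop (by norm_num)
  have := h2.inv_tendsto_atTop.const_mul d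
  simpa [div_eq_mul_inv] using this

lemma tendsto_avg_of_residues (x : ℕ → ℝ) (h0 : ∀ i, 0 ≤ x i) (h1 : ∀ i, x i ≤ 1) (c : ℝ)
    (h : ∀ r, r < 3 → Tendsto (fun K => (∑ j ∈ range K, x (3*j+r)) / K) atTop (𝓝 c)) :
    Tendsto (fun n => (∑ i ∈ range n, x i) / n) atTop (𝓝 c) := by
  have hsum : ∀ K, ∑ i ∈ range (3*K), x i
      = ∑ j ∈ range K, (x (3*j) + x (3*j+1) + x (3*j+2)) := by
    intro K
    induction K with
    | zero => simp
    | succ K ih =>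
      rw [Finset.sum_range_succ, ← ih, show 3*(K+1) = 3*K+1+1+1 from by ring,
        Finset.sum_range_succ, Finset.sum_range_succ, Finset.sum_range_succ]
      ring_nf
  have S3 : Tendsto (fun K : ℕ => (∑ i ∈ range (3*K), x i) / K) atTop (𝓝 (3*c)) := by
    have e : ∀ K : ℕ, (∑ i ∈ range (3*K), x i) / K
        = (∑ j ∈ range K, x (3*j+0))/K + (∑ j ∈ range K, x (3*j+1))/K
          + (∑ j ∈ range K, x (3*j+2))/K := by
      intro K
      rw [hsum, ← add_div, ← add_div, ← Finset.sum_add_distrib, ← Finset.sum_add_distrib]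
      norm_num
    simp_rw [e]
    have := ((h 0 (by norm_num)).add (h 1 (by norm_num))).add (h 2 (by norm_num))
    convert this using 1
    ring
  -- subsequence limits
  have sub : ∀ s, s < 3 →
      Tendsto (fun K : ℕ => (∑ i ∈ range (3*K+s), x i) / (3*K+s)) atTop (𝓝 c) := by
    intro s hs
    have hL : Tendsto (fun K : ℕ => (∑ i ∈ range (3*K), x i) / (3*K+s)) atTop (𝓝 c) := by
      have : Tendsto (fun K : ℕ =>
          ((∑ i ∈ range (3*K), x i) / K) * ((K:ℝ)/(3*K+s))) atTop (𝓝 (3*c * (1/3))) :=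
        S3.mul (aux_ratio s)
      have h3 : (3*c*(1/3) : ℝ) = c := by ring
      rw [h3] at this
      apply this.congr'
      filter_upwards [eventually_ge_atTop 1] with K hK
      have hK' : (K : ℝ) ≠ 0 := by positivity
      field_simp
    have hU : Tendsto (fun K : ℕ =>
        ((∑ i ∈ range (3*K), x i) + 2) / (3*K+s)) atTop (𝓝 c) := by
      have := hL.add (aux_vanish 2 s)
      simpa [add_div] using this
    apply tendsto_of_tendsto_of_tendsto_of_le_of_le' hL hU
    · filter_upwards [eventually_ge_atTop 1] with K hK
      have hd : (0:ℝ) < 3*K+s := by positivity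
      have hnum : ∑ i ∈ range (3*K), x i ≤ ∑ i ∈ range (3*K+s), x i :=
        Finset.sum_le_sum_of_subset_of_nonneg
          (Finset.range_subset_range.2 (show 3*K ≤ 3*K+s by omega)) (fun i _ _ => h0 i)
      exact (div_le_div_iff_of_pos_right hd).2 hnum
    · filter_upwards [eventually_ge_atTop 1] with K hK
      have hd : (0:ℝ) < 3*K+s := by positivity
      gcongr
      have hsplit : ∑ i ∈ range (3*K+s), x i
          = ∑ i ∈ range (3*K), x i + ∑ i ∈ Finset.Ico (3*K) (3*K+s), x i := by
        rw [Finset.range_eq_Ico, Finset.range_eq_Ico]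
        exact (Finset.sum_Ico_consecutive x (m := 0) (n := 3*K) (k := 3*K+s) (by omega) (by omega)).symm
      rw [hsplit]
      have hb : ∑ i ∈ Finset.Ico (3*K) (3*K+s), x i ≤ (Finset.Ico (3*K) (3*K+s)).card • (1:ℝ) :=
        Finset.sum_le_card_nsmul _ _ _ (fun i _ => h1 i)
      have hcard : (Finset.Ico (3*K) (3*K+s)).card = s := by
        rw [Nat.card_Ico]; omega
      rw [hcard] at hb
      have : (s : ℝ) ≤ 2 := by
        have : s ≤ 2 := by omega
        exact_mod_cast this
      simp only [nsmul_eq_mul, mul_one] at hb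
      linarith
  -- assemble
  rw [Metric.tendsto_atTop]
  intro ε hε
  obtain ⟨N0, hN0⟩ := Metric.tendsto_atTop.1 (sub 0 (by norm_num)) ε hε
  obtain ⟨N1, hN1⟩ := Metric.tendsto_atTop.1 (sub 1 (by norm_num)) ε hε
  obtain ⟨N2, hN2⟩ := Metric.tendsto_atTop.1 (sub 2 (by norm_num)) ε hε
  refine ⟨3 * (N0 + N1 + N2) + 3, fun n hn => ?_⟩
  have hmod := Nat.div_add_mod n 3
  set K := n / 3 with hKdef
  set s := n % 3 with hsdef
  have hs3 : s < 3 := Nat.mod_lt _ (by norm_num)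
  have hK : N0 + N1 + N2 + 1 ≤ K := by omega
  have hcase : s = 0 ∨ s = 1 ∨ s = 2 := by omega
  rcases hcase with hc | hc | hc
  · have := hN0 K (by omega)
    rw [show n = 3*K+0 from by omega]
    push_cast at this ⊢
    convert this using 3
  · have := hN1 K (by omega)
    rw [show n = 3*K+1 from by omega]
    push_cast at this ⊢
    convert this using 3
  · have := hN2 K (by omega)
    rw [show n = 3*K+2 from by omega]
    push_cast at this ⊢
    convert this using 3

namespace Stmt8Aux

def μu : Measure ℝ := (volume : Measure ℝ).restrict (Set.Icc 0 1)

instance : IsProbabilityMeasure μu :=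
  ⟨by simp [μu, Real.volume_Icc]⟩

def Aset : Set (ℝ × ℝ × ℝ) := {p | p.2.1 < p.1 ∧ p.2.2 < p.2.1}
def Bset : Set (ℝ × ℝ × ℝ) := {p | p.1 ≤ p.2.1 ∧ p.2.1 ≤ p.2.2}
def Cset : Set (ℝ × ℝ × ℝ) := {p | ¬ (p.2.1 < p.1 ↔ p.2.2 < p.2.1)}

lemma measurableSet_Aset : MeasurableSet Aset :=
  (measurableSet_lt (measurable_fst.comp measurable_snd) measurable_fst).inter
    (measurableSet_lt (measurable_snd.comp measurable_snd)
      (measurable_fst.comp measurable_snd))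

lemma measurableSet_Bset : MeasurableSet Bset :=
  (measurableSet_le measurable_fst (measurable_fst.comp measurable_snd)).inter
    (measurableSet_le (measurable_fst.comp measurable_snd)
      (measurable_snd.comp measurable_snd))

lemma Cset_eq : Cset = (Aset ∪ Bset)ᶜ := by
  ext p
  simp only [Cset, Aset, Bset, Set.mem_setOf_eq, Set.mem_compl_iff, Set.mem_union, not_or,
    ← not_lt]
  tauto

lemma measurableSet_Cset : MeasurableSet Cset := by
  rw [Cset_eq]
  exact (measurableSet_Aset.union measurableSet_Bset).compl

lemma μu_Iio (y : ℝ) (hy : y ∈ Set.Icc (0:ℝ) 1) : μu (Set.Iio y) = ENNReal.ofReal y := by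
  rw [μu, Measure.restrict_apply measurableSet_Iio]
  have : Set.Iio y ∩ Set.Icc 0 1 = Set.Ico 0 y := by
    ext z
    simp only [Set.mem_inter_iff, Set.mem_Iio, Set.mem_Icc, Set.mem_Ico]
    constructor
    · rintro ⟨h1, h2, h3⟩; exact ⟨h2, h1⟩
    · rintro ⟨h1, h2⟩; exact ⟨h2, h1, le_trans (le_of_lt h2) hy.2⟩
  rw [this, Real.volume_Ico, sub_zero]

lemma μu_Ici (y : ℝ) (hy : y ∈ Set.Icc (0:ℝ) 1) : μu (Set.Ici y) = ENNReal.ofReal (1 - y) := by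
  rw [μu, Measure.restrict_apply measurableSet_Ici]
  have : Set.Ici y ∩ Set.Icc 0 1 = Set.Icc y 1 := by
    ext z
    simp only [Set.mem_inter_iff, Set.mem_Ici, Set.mem_Icc]
    constructor
    · rintro ⟨h1, h2, h3⟩; exact ⟨h1, h3⟩
    · rintro ⟨h1, h2⟩; exact ⟨h1, le_trans hy.1 h1, h2⟩
  rw [this, Real.volume_Icc]

lemma inner_A (x : ℝ) (hx : x ∈ Set.Icc (0:ℝ) 1) :
    (μu.prod μu) {q : ℝ × ℝ | q.1 < x ∧ q.2 < q.1} = ENNReal.ofReal (x^2/2) := by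
  have hmeas : MeasurableSet {q : ℝ × ℝ | q.1 < x ∧ q.2 < q.1} :=
    (measurableSet_lt measurable_fst measurable_const).inter
      (measurableSet_lt measurable_snd measurable_fst)
  rw [Measure.prod_apply hmeas]
  have hae : ∀ y ∈ Set.Icc (0:ℝ) 1,
      μu (Prod.mk y ⁻¹' {q : ℝ × ℝ | q.1 < x ∧ q.2 < q.1})
        = Set.indicator (Set.Iio x) ENNReal.ofReal y := by
    intro y hy
    have : Prod.mk y ⁻¹' {q : ℝ × ℝ | q.1 < x ∧ q.2 < q.1}
        = if y < x then Set.Iio y else ∅ := by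
      by_cases h : y < x
      · simp only [if_pos h]
        ext z; simp [h]
      · simp only [if_neg h]
        ext z; simp [h]
    rw [this]
    by_cases h : y < x
    · rw [if_pos h, μu_Iio y hy, Set.indicator_of_mem (Set.mem_Iio.2 h)]
    · rw [if_neg h, Set.indicator_of_notMem (fun hc => h (Set.mem_Iio.1 hc))]
      exact measure_empty
  calc ∫⁻ y, μu (Prod.mk y ⁻¹' {q : ℝ × ℝ | q.1 < x ∧ q.2 < q.1}) ∂μu
      = ∫⁻ y, Set.indicator (Set.Iio x) ENNReal.ofReal y ∂μu := by
        apply lintegral_congr_ae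
        apply (ae_restrict_iff' measurableSet_Icc).2
        exact Eventually.of_forall hae
    _ = ∫⁻ y in Set.Iio x, ENNReal.ofReal y ∂μu := lintegral_indicator measurableSet_Iio _
    _ = ∫⁻ y in Set.Ico 0 x, ENNReal.ofReal y ∂volume := by
        rw [μu, Measure.restrict_restrict measurableSet_Iio]
        have hset : Set.Iio x ∩ Set.Icc 0 1 = Set.Ico 0 x := by
          ext z
          simp only [Set.mem_inter_iff, Set.mem_Iio, Set.mem_Icc, Set.mem_Ico]
          constructor
          · rintro ⟨h1, h2, h3⟩; exact ⟨h2, h1⟩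
          · rintro ⟨h1, h2⟩; exact ⟨h2, h1, le_trans (le_of_lt h2) hx.2⟩
        rw [hset]
    _ = ENNReal.ofReal (∫ y in Set.Ico 0 x, y ∂volume) := by
        rw [← ofReal_integral_eq_lintegral_ofReal]
        · exact (continuous_id.integrableOn_Icc).mono_set Set.Ico_subset_Icc_self
        · exact (ae_restrict_iff' measurableSet_Ico).2
            (Eventually.of_forall (fun z hz => hz.1))
    _ = ENNReal.ofReal (x^2/2) := by
        rw [MeasureTheory.integral_Ico_eq_integral_Ioo,
          ← MeasureTheory.integral_Ioc_eq_integral_Ioo,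
          ← intervalIntegral.integral_of_le hx.1, integral_id]
        norm_num

lemma inner_B (x : ℝ) (hx : x ∈ Set.Icc (0:ℝ) 1) :
    (μu.prod μu) {q : ℝ × ℝ | x ≤ q.1 ∧ q.1 ≤ q.2} = ENNReal.ofReal ((1-x)^2/2) := by
  have hmeas : MeasurableSet {q : ℝ × ℝ | x ≤ q.1 ∧ q.1 ≤ q.2} :=
    (measurableSet_le measurable_const measurable_fst).inter
      (measurableSet_le measurable_fst measurable_snd)
  rw [Measure.prod_apply hmeas]
  have hae : ∀ y ∈ Set.Icc (0:ℝ) 1,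
      μu (Prod.mk y ⁻¹' {q : ℝ × ℝ | x ≤ q.1 ∧ q.1 ≤ q.2})
        = Set.indicator (Set.Ici x) (fun y => ENNReal.ofReal (1 - y)) y := by
    intro y hy
    have : Prod.mk y ⁻¹' {q : ℝ × ℝ | x ≤ q.1 ∧ q.1 ≤ q.2}
        = if x ≤ y then Set.Ici y else ∅ := by
      by_cases h : x ≤ y
      · simp only [if_pos h]
        ext z; simp [h]
      · simp only [if_neg h]
        ext z; simp [h]
    rw [this]
    by_cases h : x ≤ y
    · rw [if_pos h, μu_Ici y hy, Set.indicator_of_mem (Set.mem_Ici.2 h)]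
    · rw [if_neg h, Set.indicator_of_notMem (fun hc => h (Set.mem_Ici.1 hc))]
      exact measure_empty
  calc ∫⁻ y, μu (Prod.mk y ⁻¹' {q : ℝ × ℝ | x ≤ q.1 ∧ q.1 ≤ q.2}) ∂μu
      = ∫⁻ y, Set.indicator (Set.Ici x) (fun y => ENNReal.ofReal (1 - y)) y ∂μu := by
        apply lintegral_congr_ae
        apply (ae_restrict_iff' measurableSet_Icc).2
        exact Eventually.of_forall hae
    _ = ∫⁻ y in Set.Ici x, ENNReal.ofReal (1 - y) ∂μu := lintegral_indicator measurableSet_Ici _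
    _ = ∫⁻ y in Set.Icc x 1, ENNReal.ofReal (1 - y) ∂volume := by
        rw [μu, Measure.restrict_restrict measurableSet_Ici]
        have hset : Set.Ici x ∩ Set.Icc 0 1 = Set.Icc x 1 := by
          ext z
          simp only [Set.mem_inter_iff, Set.mem_Ici, Set.mem_Icc]
          constructor
          · rintro ⟨h1, h2, h3⟩; exact ⟨h1, h3⟩
          · rintro ⟨h1, h2⟩; exact ⟨h1, le_trans hx.1 h1, h2⟩
        rw [hset]
    _ = ENNReal.ofReal (∫ y in Set.Icc x 1, (1 - y) ∂volume) := by
        rw [← ofReal_integral_eq_lintegral_ofReal]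
        · exact (continuous_const.sub continuous_id).integrableOn_Icc
        · exact (ae_restrict_iff' measurableSet_Icc).2
            (Eventually.of_forall (fun z hz => by simp [hz.2]))
    _ = ENNReal.ofReal ((1-x)^2/2) := by
        rw [MeasureTheory.integral_Icc_eq_integral_Ioc,
          ← intervalIntegral.integral_of_le hx.2]
        rw [intervalIntegral.integral_sub intervalIntegrable_const
          intervalIntegral.intervalIntegrable_id]
        simp only [intervalIntegral.integral_const, integral_id, smul_eq_mul, mul_one]
        ring_nf

def μ3 : Measure (ℝ × ℝ × ℝ) := μu.prod (μu.prod μu)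

lemma measA : μ3 Aset = ENNReal.ofReal (1/6) := by
  rw [μ3, Measure.prod_apply measurableSet_Aset]
  have hae : ∀ x ∈ Set.Icc (0:ℝ) 1,
      (μu.prod μu) (Prod.mk x ⁻¹' Aset) = ENNReal.ofReal (x^2/2) := by
    intro x hx
    have : Prod.mk x ⁻¹' Aset = {q : ℝ × ℝ | q.1 < x ∧ q.2 < q.1} := rfl
    rw [this, inner_A x hx]
  calc ∫⁻ x, (μu.prod μu) (Prod.mk x ⁻¹' Aset) ∂μu
      = ∫⁻ x, ENNReal.ofReal (x^2/2) ∂μu := by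
        apply lintegral_congr_ae
        apply (ae_restrict_iff' measurableSet_Icc).2
        exact Eventually.of_forall hae
    _ = ENNReal.ofReal (∫ x in Set.Icc (0:ℝ) 1, x^2/2 ∂volume) := by
        rw [μu, ← ofReal_integral_eq_lintegral_ofReal]
        · exact ((continuous_pow 2).div_const 2).integrableOn_Icc
        · exact (ae_restrict_iff' measurableSet_Icc).2
            (Eventually.of_forall (fun z hz => by positivity))
    _ = ENNReal.ofReal (1/6) := by
        rw [MeasureTheory.integral_Icc_eq_integral_Ioc,
          ← intervalIntegral.integral_of_le (by norm_num : (0:ℝ) ≤ 1)]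
        norm_num [intervalIntegral.integral_div, integral_pow]

lemma measB : μ3 Bset = ENNReal.ofReal (1/6) := by
  rw [μ3, Measure.prod_apply measurableSet_Bset]
  have hae : ∀ x ∈ Set.Icc (0:ℝ) 1,
      (μu.prod μu) (Prod.mk x ⁻¹' Bset) = ENNReal.ofReal ((1-x)^2/2) := by
    intro x hx
    have : Prod.mk x ⁻¹' Bset = {q : ℝ × ℝ | x ≤ q.1 ∧ q.1 ≤ q.2} := rfl
    rw [this, inner_B x hx]
  calc ∫⁻ x, (μu.prod μu) (Prod.mk x ⁻¹' Bset) ∂μu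
      = ∫⁻ x, ENNReal.ofReal ((1-x)^2/2) ∂μu := by
        apply lintegral_congr_ae
        apply (ae_restrict_iff' measurableSet_Icc).2
        exact Eventually.of_forall hae
    _ = ENNReal.ofReal (∫ x in Set.Icc (0:ℝ) 1, (1-x)^2/2 ∂volume) := by
        rw [μu, ← ofReal_integral_eq_lintegral_ofReal]
        · apply Continuous.integrableOn_Icc
          continuity
        · exact (ae_restrict_iff' measurableSet_Icc).2
            (Eventually.of_forall (fun z hz => by positivity))
    _ = ENNReal.ofReal (1/6) := by
        rw [MeasureTheory.integral_Icc_eq_integral_Ioc,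
          ← intervalIntegral.integral_of_le (by norm_num : (0:ℝ) ≤ 1)]
        have : ∀ x : ℝ, (1-x)^2/2 = x^2/2 - x + 1/2 := by intro x; ring
        simp_rw [this]
        rw [intervalIntegral.integral_add (by
            apply IntervalIntegrable.sub
            · exact (intervalIntegral.intervalIntegrable_pow 2).div_const 2
            · exact intervalIntegral.intervalIntegrable_id) intervalIntegrable_const,
          intervalIntegral.integral_sub ((intervalIntegral.intervalIntegrable_pow 2).div_const 2)
            intervalIntegral.intervalIntegrable_id]
        norm_num [intervalIntegral.integral_div, integral_pow, integral_id]

lemma disjAB : Disjoint Aset Bset := by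
  rw [Set.disjoint_left]
  rintro p ⟨h1, h2⟩ ⟨h3, h4⟩
  linarith

lemma measC : μ3 Cset = ENNReal.ofReal (2/3) := by
  have h1 : μ3 (Aset ∪ Bset) = ENNReal.ofReal (1/6) + ENNReal.ofReal (1/6) := by
    rw [measure_union disjAB measurableSet_Bset, measA, measB]
  have hprob : IsProbabilityMeasure μ3 := by
    rw [μ3]; infer_instance
  rw [Cset_eq, measure_compl (measurableSet_Aset.union measurableSet_Bset)
    (measure_ne_top _ _), measure_univ, h1,
    ← ENNReal.ofReal_add (by norm_num) (by norm_num),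
    ← ENNReal.ofReal_one, ← ENNReal.ofReal_sub _ (by norm_num)]
  norm_num

end Stmt8Aux

lemma card_chSet_eq_sum (b : ℕ → ℝ) (n : ℕ) :
    ((chSet b n).card : ℝ)
      = ∑ k ∈ Finset.range (n-2),
          (if ¬ (b (k+2) < b (k+1) ↔ b (k+3) < b (k+2)) then (1:ℝ) else 0) := by
  classical
  rw [chSet, Finset.card_filter]
  push_cast
  rw [← Finset.Ico_add_one_right_eq_Icc, Finset.sum_Ico_eq_sum_range,
    show n - 2 + 1 - 1 = n - 2 from by omega]
  apply Finset.sum_congr rfl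
  intro k _
  rw [show 1 + k = k + 1 from by omega, show k+1+1 = k+2 from by omega,
    show k+1+2 = k+3 from by omega]

lemma tendsto_shift (S : ℕ → ℝ) (c : ℝ) (h : Tendsto (fun m => S m / m) atTop (𝓝 c)) :
    Tendsto (fun n : ℕ => S (n-2) / n) atTop (𝓝 c) := by
  have h1 : Tendsto (fun n : ℕ => S (n-2) / ((n-2 : ℕ) : ℝ)) atTop (𝓝 c) :=
    h.comp (tendsto_sub_atTop_nat 2)
  have h2 : Tendsto (fun n : ℕ => ((n-2 : ℕ) : ℝ) / n) atTop (𝓝 1) := by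
    have hb : Tendsto (fun n : ℕ => 1 - 2 * (1/(n:ℝ))) atTop (𝓝 1) := by
      have := tendsto_one_div_atTop_nhds_zero_nat.const_mul (2:ℝ)
      simpa using tendsto_const_nhds.sub this
    apply hb.congr'
    filter_upwards [eventually_ge_atTop 2] with n hn
    have hn0 : (n : ℝ) ≠ 0 := by positivity
    rw [Nat.cast_sub hn]
    push_cast
    field_simp
  have := h1.mul h2
  rw [mul_one] at this
  apply this.congr'
  filter_upwards [eventually_ge_atTop 3] with n hn
  have hn2 : ((n-2 : ℕ) : ℝ) ≠ 0 := by
    have : 1 ≤ n - 2 := by omega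
    have : (1:ℝ) ≤ ((n-2:ℕ):ℝ) := by exact_mod_cast this
    linarith
  field_simp

/-- if `a₁, a₂, …` are i.i.d. uniform on `[0,1]` and `LAₙ` is the
length of the longest alternating subsequence of `(a₁,…,aₙ)`, then `LAₙ/n → 2/3`
almost surely. -/
theorem stmt8
    {Ω : Type*} [MeasurableSpace Ω] (P : Measure Ω) [IsProbabilityMeasure P]
    (a : ℕ → Ω → ℝ)
    (hmeas : ∀ i, Measurable (a i))
    (hindep : iIndepFun a P)
    (hunif : ∀ i, Measure.map (a i) P = (volume : Measure ℝ).restrict (Set.Icc 0 1)) :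
    ∀ᵐ ω ∂P,
      Tendsto (fun n : ℕ => (LAon (fun i => a i ω) (Finset.Icc 1 n) : ℝ) / n)
        atTop (nhds (2 / 3)) := by
  classical
  open Stmt8Aux in
  have hμ : ∀ i, Measure.map (a i) P = μu := hunif
  -- the indicator random variables
  set g : ℝ × ℝ × ℝ → ℝ := Cset.indicator (fun _ => (1:ℝ)) with hg_def
  have hg : Measurable g := measurable_const.indicator measurableSet_Cset
  set T : ℕ → Ω → ℝ × ℝ × ℝ := fun k ω => (a (k+1) ω, (a (k+2) ω, a (k+3) ω)) with hT_def
  have hTmeas : ∀ k, Measurable (T k) :=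
    fun k => (hmeas (k+1)).prodMk ((hmeas (k+2)).prodMk (hmeas (k+3)))
  set X : ℕ → Ω → ℝ := fun k ω => g (T k ω) with hX_def
  have hXmeas : ∀ k, Measurable (X k) := fun k => hg.comp (hTmeas k)
  have hX01 : ∀ k ω, 0 ≤ X k ω ∧ X k ω ≤ 1 := by
    intro k ω
    simp only [hX_def, hg_def, Set.indicator_apply]
    by_cases h : T k ω ∈ Cset <;> simp [h]
  -- law of the triples
  have hTlaw : ∀ k, Measure.map (T k) P = μ3 := by
    intro k
    have h23 : Measure.map (fun ω => (a (k+2) ω, a (k+3) ω)) P = μu.prod μu := by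
      rw [(indepFun_iff_map_prod_eq_prod_map_map (hmeas (k+2)).aemeasurable
        (hmeas (k+3)).aemeasurable).1 (hindep.indepFun (by omega)), hμ, hμ]
    have h1 : IndepFun (a (k+1)) (fun ω => (a (k+2) ω, a (k+3) ω)) P :=
      (hindep.indepFun_prodMk hmeas (k+2) (k+3) (k+1) (by omega) (by omega)).symm
    have := (indepFun_iff_map_prod_eq_prod_map_map (hmeas (k+1)).aemeasurable
      ((hmeas (k+2)).prodMk (hmeas (k+3))).aemeasurable).1 h1
    rw [hT_def, μ3, ← h23, ← hμ (k+1)]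
    exact this
  -- identically distributed
  have hident : ∀ k k', IdentDistrib (X k) (X k') P P := by
    intro k k'
    refine ⟨(hXmeas k).aemeasurable, (hXmeas k').aemeasurable, ?_⟩
    rw [hX_def]
    show Measure.map (g ∘ T k) P = Measure.map (g ∘ T k') P
    rw [← Measure.map_map hg (hTmeas k), ← Measure.map_map hg (hTmeas k'), hTlaw, hTlaw]
  -- integrability and expectation
  have hX0eq : X 0 = fun ω => ((T 0) ⁻¹' Cset).indicator (fun _ => (1:ℝ)) ω := by
    funext ω
    simp only [hX_def, hg_def, Set.indicator_apply, Set.mem_preimage]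
  have hint0 : Integrable (X 0) P := by
    rw [hX0eq]
    exact (integrable_const (1:ℝ)).indicator ((hTmeas 0) measurableSet_Cset)
  have hexp : ∫ ω, X 0 ω ∂P = 2/3 := by
    have h1 : ∫ ω, X 0 ω ∂P = (P ((T 0) ⁻¹' Cset)).toReal • (1:ℝ) := by
      rw [hX0eq]
      exact integral_indicator_const (1:ℝ) ((hTmeas 0) measurableSet_Cset)
    rw [h1, smul_eq_mul, mul_one, ← Measure.map_apply (hTmeas 0) measurableSet_Cset,
      hTlaw 0, measC]
    rw [ENNReal.toReal_ofReal (by norm_num)]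
  -- pairwise independence within a residue class
  have hpind : ∀ k k' : ℕ, k + 3 ≤ k' → IndepFun (X k) (X k') P := by
    intro k k' hkk'
    have hdisj : Disjoint ({k+1, k+2, k+3} : Finset ℕ) ({k'+1, k'+2, k'+3} : Finset ℕ) := by
      simp only [Finset.disjoint_left, Finset.mem_insert, Finset.mem_singleton]
      omega
    have base := hindep.indepFun_finset ({k+1, k+2, k+3} : Finset ℕ)
      ({k'+1, k'+2, k'+3} : Finset ℕ) hdisj hmeas
    set φ : ∀ m : ℕ, ((i : ({m+1, m+2, m+3} : Finset ℕ)) → ℝ) → ℝ :=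
      fun m v => g (v ⟨m+1, by simp⟩, (v ⟨m+2, by simp⟩, v ⟨m+3, by simp⟩)) with hφ_def
    have hφmeas : ∀ m, Measurable (φ m) := by
      intro m
      apply hg.comp
      exact (measurable_pi_apply _).prodMk
        ((measurable_pi_apply _).prodMk (measurable_pi_apply _))
    exact base.comp (hφmeas k) (hφmeas k')
  -- almost sure distinctness
  have hdist : ∀ᵐ ω ∂P, ∀ i j : ℕ, i ≠ j → a i ω ≠ a j ω := by
    rw [ae_all_iff]
    intro i
    rw [ae_all_iff]
    intro j
    by_cases hij : i = j
    · filter_upwards with ω h; exact absurd hij h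
    · have hind : IndepFun (a i) (a j) P := hindep.indepFun hij
      have hmap : Measure.map (fun ω => (a i ω, a j ω)) P = μu.prod μu := by
        rw [(indepFun_iff_map_prod_eq_prod_map_map (hmeas i).aemeasurable
          (hmeas j).aemeasurable).1 hind, hμ, hμ]
      have hdiagmeas : MeasurableSet {p : ℝ × ℝ | p.1 = p.2} :=
        measurableSet_eq_fun measurable_fst measurable_snd
      have hdiag : (μu.prod μu) {p : ℝ × ℝ | p.1 = p.2} = 0 := by
        rw [Measure.prod_apply hdiagmeas]
        have hz : ∀ x : ℝ, μu (Prod.mk x ⁻¹' {p : ℝ × ℝ | p.1 = p.2}) = 0 := by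
          intro x
          have hpre : Prod.mk x ⁻¹' {p : ℝ × ℝ | p.1 = p.2} = {x} := by
            ext z; simp [eq_comm]
          rw [hpre, μu, Measure.restrict_apply (measurableSet_singleton x)]
          exact measure_mono_null Set.inter_subset_left Real.volume_singleton
        calc ∫⁻ x, μu (Prod.mk x ⁻¹' {p : ℝ × ℝ | p.1 = p.2}) ∂μu
            = ∫⁻ _, 0 ∂μu := lintegral_congr hz
          _ = 0 := lintegral_zero
      have h0 : P {ω | a i ω = a j ω} = 0 := by
        have hpre : {ω | a i ω = a j ω}
            = (fun ω => (a i ω, a j ω)) ⁻¹' {p : ℝ × ℝ | p.1 = p.2} := rfl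
        rw [hpre, ← Measure.map_apply ((hmeas i).prodMk (hmeas j)) hdiagmeas, hmap, hdiag]
      rw [ae_iff]
      have hset : {ω | ¬(i ≠ j → a i ω ≠ a j ω)} = {ω | a i ω = a j ω} := by
        ext ω
        simp [hij]
      rw [hset]
      exact h0
  -- strong law for the three residue classes
  have hslln : ∀ r, r < 3 → ∀ᵐ ω ∂P,
      Tendsto (fun K : ℕ => (∑ j ∈ range K, X (3*j+r) ω) / K) atTop (𝓝 (2/3)) := by
    intro r hr
    have hident' : ∀ i : ℕ, IdentDistrib (X (3*i+r)) (X (3*0+r)) P P :=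
      fun i => hident _ _
    have hintr : Integrable (X (3*0+r)) P := (hident (3*0+r) 0).integrable_iff.2 hint0
    have hpair : Pairwise (Function.onFun (IndepFun · · P) (fun j => X (3*j+r))) := by
      intro j j' hjj'
      rcases Nat.lt_or_ge j j' with h' | h'
      · exact hpind _ _ (by omega)
      · exact (hpind _ _ (by omega)).symm
    have := strong_law_ae_real (fun j => X (3*j+r)) hintr hpair hident'
    have hexp' : ∫ ω, X (3*0+r) ω ∂P = 2/3 := by
      rw [(hident (3*0+r) 0).integral_eq, hexp]
    filter_upwards [this] with ω hω
    rwa [hexp'] at hω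
  -- combine
  filter_upwards [hdist, hslln 0 (by norm_num), hslln 1 (by norm_num),
    hslln 2 (by norm_num)] with ω hdω h0ω h1ω h2ω
  set b : ℕ → ℝ := fun i => a i ω with hb_def
  -- the averaged sums converge
  have havg : Tendsto (fun n : ℕ => (∑ i ∈ range n, X i ω) / n) atTop (𝓝 (2/3)) := by
    apply tendsto_avg_of_residues (fun i => X i ω)
      (fun i => (hX01 i ω).1) (fun i => (hX01 i ω).2)
    intro r hr
    have : r = 0 ∨ r = 1 ∨ r = 2 := by omega
    rcases this with rfl | rfl | rfl
    · exact h0ω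
    · exact h1ω
    · exact h2ω
  have hXite : ∀ k, X k ω
      = (if ¬ (b (k+2) < b (k+1) ↔ b (k+3) < b (k+2)) then (1:ℝ) else 0) := by
    intro k
    simp only [hX_def, hg_def, Set.indicator_apply]
    by_cases h : T k ω ∈ Cset
    · rw [if_pos h, if_pos]
      exact h
    · rw [if_neg h, if_neg]
      exact h
  have hcard : ∀ n : ℕ, ((chSet b n).card : ℝ) = ∑ i ∈ range (n-2), X i ω := by
    intro n
    rw [card_chSet_eq_sum]
    exact Finset.sum_congr rfl (fun k _ => (hXite k).symm)
  have hshift : Tendsto (fun n : ℕ => ((chSet b n).card : ℝ) / n) atTop (𝓝 (2/3)) := by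
    have := tendsto_shift (fun m => ∑ i ∈ range m, X i ω) (2/3) havg
    apply this.congr'
    filter_upwards with n
    rw [hcard n]
  -- sandwich
  have hone : Tendsto (fun n : ℕ => 1/(n:ℝ)) atTop (𝓝 0) := tendsto_one_div_atTop_nhds_zero_nat
  have hL : Tendsto (fun n : ℕ => (((chSet b n).card : ℝ) - 1) / n) atTop (𝓝 (2/3)) := by
    have h1 := hshift.sub hone
    rw [sub_zero] at h1
    apply h1.congr
    intro n
    rw [sub_div]
  have hU : Tendsto (fun n : ℕ => (((chSet b n).card : ℝ) + 2) / n) atTop (𝓝 (2/3)) := by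
    have h2 := hone.const_mul (2:ℝ)
    rw [mul_zero] at h2
    have h1 := hshift.add h2
    rw [add_zero] at h1
    apply h1.congr
    intro n
    rw [add_div]
    ring_nf
  apply tendsto_of_tendsto_of_tendsto_of_le_of_le' hL hU
  · filter_upwards [eventually_ge_atTop 1] with n hn
    have hnpos : (0:ℝ) < n := by exact_mod_cast Nat.pos_of_ne_zero (by omega)
    have hnat : (chSet b n).card ≤ LAon b (Finset.Icc 1 n) + 1 := by
      have := LAon_lower b (fun i j hij => hdω i j hij) n
      omega
    have hreal : ((chSet b n).card : ℝ) - 1 ≤ (LAon b (Finset.Icc 1 n) : ℝ) := by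
      have : ((chSet b n).card : ℝ) ≤ (LAon b (Finset.Icc 1 n) : ℝ) + 1 := by
        exact_mod_cast hnat
      linarith
    exact (div_le_div_iff_of_pos_right hnpos).2 hreal
  · filter_upwards [eventually_ge_atTop 1] with n hn
    have hnpos : (0:ℝ) < n := by exact_mod_cast Nat.pos_of_ne_zero (by omega)
    have hnat := LAon_upper b n
    have hreal : (LAon b (Finset.Icc 1 n) : ℝ) ≤ ((chSet b n).card : ℝ) + 2 := by
      exact_mod_cast hnat
    exact (div_le_div_iff_of_pos_right hnpos).2 hreal

end
end

section
/- Let μ be a probability measure supported on the finite set [q] = {1,…,q}, with at least two atoms. Then (1/2)·(1 − Σ_{x∈[q]} p_x²) ≤ Osc(μ) ≤ (2/3)·(1 − Σ_{x∈[q]} p_x³). -/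
open MeasureTheory Finset

noncomputable section

/-- `L_x = Σ_{y < x} p_y`. -/
def Lbelow {q : ℕ} (p : Fin q → ℝ) (x : Fin q) : ℝ :=
  ∑ y ∈ Finset.univ.filter (fun y => y < x), p y

/-- `U_x = Σ_{y > x} p_y`. -/
def Uabove {q : ℕ} (p : Fin q → ℝ) (x : Fin q) : ℝ :=
  ∑ y ∈ Finset.univ.filter (fun y => x < y), p y

/-- The total oscillation `Osc(μ) = Σ_x (L_x² + U_x²)/(L_x + U_x) · p_x`
(terms with `L_x + U_x = 0` being `0`, as division by `0` yields `0`). -/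
def Osc {q : ℕ} (p : Fin q → ℝ) : ℝ :=
  ∑ x, (Lbelow p x ^ 2 + Uabove p x ^ 2) / (Lbelow p x + Uabove p x) * p x

namespace Stmt11Aux

/-- Partial sums of `p` along `Fin q`, as a function of a natural number. -/
def ell {q : ℕ} (p : Fin q → ℝ) (n : ℕ) : ℝ :=
  ∑ y : Fin q, if (y : ℕ) < n then p y else 0

lemma ell_val {q : ℕ} (p : Fin q → ℝ) (x : Fin q) : ell p x.val = Lbelow p x := by
  unfold ell Lbelow
  rw [Finset.sum_filter]
  exact Finset.sum_congr rfl fun y _ => by simp only [Fin.lt_def]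

lemma ell_succ {q : ℕ} (p : Fin q → ℝ) (x : Fin q) :
    ell p (x.val + 1) = Lbelow p x + p x := by
  have key : ∀ y : Fin q, (if (y : ℕ) < x.val + 1 then p y else 0)
      = (if (y : ℕ) < x.val then p y else 0) + (if y = x then p y else 0) := by
    intro y
    rcases lt_trichotomy (y : ℕ) x.val with h | h | h
    · have hne : y ≠ x := fun he => by simp [he] at h
      simp [h, Nat.lt_succ_of_lt h, hne]
    · have he : y = x := Fin.ext h
      simp [he]
    · have h1 : ¬ ((y : ℕ) < x.val + 1) := by omega
      have h2 : ¬ ((y : ℕ) < x.val) := by omega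
      have hne : y ≠ x := fun he => by simp [he] at h
      simp [h1, h2, hne]
  unfold ell
  rw [Finset.sum_congr rfl fun y _ => key y, Finset.sum_add_distrib,
    Finset.sum_ite_eq' Finset.univ x p]
  simp only [Finset.mem_univ, if_true]
  congr 1
  simp only [Lbelow, Finset.sum_filter, Fin.lt_def]

lemma ell_top {q : ℕ} (p : Fin q → ℝ) : ell p q = ∑ y, p y := by
  unfold ell
  exact Finset.sum_congr rfl fun y _ => by simp [y.isLt]

lemma ell_zero {q : ℕ} (p : Fin q → ℝ) : ell p 0 = 0 := by
  simp [ell]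

lemma tele {q : ℕ} (p : Fin q → ℝ) (g : ℝ → ℝ) :
    ∑ x : Fin q, (g (ell p (x.val + 1)) - g (ell p x.val)) = g (ell p q) - g (ell p 0) := by
  rw [Fin.sum_univ_eq_sum_range (fun i => g (ell p (i + 1)) - g (ell p i)) q]
  exact Finset.sum_range_sub (fun i => g (ell p i)) q

theorem main {q : ℕ} (p : Fin q → ℝ) (hp0 : ∀ x, 0 ≤ p x) (hsum : ∑ x, p x = 1) :
    (1 / 2) * (1 - ∑ x, p x ^ 2) ≤ Osc p ∧ Osc p ≤ (2 / 3) * (1 - ∑ x, p x ^ 3) := by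
  set L := fun x => Lbelow p x with hLdef
  set U := fun x => Uabove p x with hUdef
  have hL0 : ∀ x, 0 ≤ L x := fun x => Finset.sum_nonneg fun y _ => hp0 y
  have hU0 : ∀ x, 0 ≤ U x := fun x => Finset.sum_nonneg fun y _ => hp0 y
  -- L x + p x + U x = 1
  have hLU : ∀ x, L x + p x + U x = 1 := by
    intro x
    have key : ∀ y : Fin q, p y = (if y < x then p y else 0) + (if y = x then p y else 0)
        + (if x < y then p y else 0) := by
      intro y
      rcases lt_trichotomy y x with h | h | h
      · simp [h, ne_of_lt h, asymm h]
      · simp [h]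
      · simp [asymm h, (ne_of_lt h).symm, h]
    have := Finset.sum_congr rfl fun y (_ : y ∈ Finset.univ) => key y
    rw [hsum, Finset.sum_add_distrib, Finset.sum_add_distrib,
      Finset.sum_ite_eq' Finset.univ x p] at this
    simp only [Finset.mem_univ, if_true] at this
    rw [← Finset.sum_filter, ← Finset.sum_filter] at this
    simp only [hLdef, hUdef, Lbelow, Uabove]
    linarith [this]
  -- telescoping identities
  have T2 : ∑ x, ((L x + p x) ^ 2 - (L x) ^ 2) = 1 := by
    calc ∑ x, ((L x + p x) ^ 2 - (L x) ^ 2)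
        = ∑ x : Fin q, ((fun t => t ^ 2) (ell p (x.val + 1)) - (fun t => t ^ 2) (ell p x.val)) := by
          refine Finset.sum_congr rfl fun x _ => ?_
          rw [ell_succ, ell_val]
      _ = (ell p q) ^ 2 - (ell p 0) ^ 2 := tele p (fun t => t ^ 2)
      _ = 1 := by rw [ell_top, ell_zero, hsum]; norm_num
  have T3 : ∑ x, ((L x + p x) ^ 3 - (L x) ^ 3) = 1 := by
    calc ∑ x, ((L x + p x) ^ 3 - (L x) ^ 3)
        = ∑ x : Fin q, ((fun t => t ^ 3) (ell p (x.val + 1)) - (fun t => t ^ 3) (ell p x.val)) := by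
          refine Finset.sum_congr rfl fun x _ => ?_
          rw [ell_succ, ell_val]
      _ = (ell p q) ^ 3 - (ell p 0) ^ 3 := tele p (fun t => t ^ 3)
      _ = 1 := by rw [ell_top, ell_zero, hsum]; norm_num
  set A := ∑ x, p x ^ 2 with hA
  set B := ∑ x, p x ^ 3 with hB
  set C := ∑ x, p x * L x with hC
  set D := ∑ x, (p x ^ 2 * L x + p x * L x ^ 2) with hD
  have hCA : 2 * C + A = 1 := by
    have : ∑ x, ((L x + p x) ^ 2 - (L x) ^ 2) = ∑ x, (2 * (p x * L x) + p x ^ 2) :=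
      Finset.sum_congr rfl fun x _ => by ring
    rw [this, Finset.sum_add_distrib, ← Finset.mul_sum] at T2
    linarith [T2]
  have hDB : 3 * D + B = 1 := by
    have : ∑ x, ((L x + p x) ^ 3 - (L x) ^ 3)
        = ∑ x, (3 * (p x ^ 2 * L x + p x * L x ^ 2) + p x ^ 3) :=
      Finset.sum_congr rfl fun x _ => by ring
    rw [this, Finset.sum_add_distrib, ← Finset.mul_sum] at T3
    linarith [T3]
  have hPLU : ∑ x, p x * L x * U x = C - D := by
    have : ∑ x, p x * L x * U x = ∑ x, (p x * L x - (p x ^ 2 * L x + p x * L x ^ 2)) :=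
      Finset.sum_congr rfl fun x _ => by
        have h := hLU x
        linear_combination (p x * L x) * h
    rw [this, Finset.sum_sub_distrib]
  -- the Osc sum, rewritten
  have hOsc : Osc p = ∑ x, (L x ^ 2 + U x ^ 2) / (L x + U x) * p x := rfl
  constructor
  · -- lower bound
    rw [hOsc]
    have hstep : ∑ x, (1 / 2) * ((L x + U x) * p x)
        ≤ ∑ x, (L x ^ 2 + U x ^ 2) / (L x + U x) * p x := by
      refine Finset.sum_le_sum fun x _ => ?_
      rcases eq_or_lt_of_le (add_nonneg (hL0 x) (hU0 x)) with h | h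
      · have hl : L x = 0 := by nlinarith [hL0 x, hU0 x]
        have hu : U x = 0 := by nlinarith [hL0 x, hU0 x]
        simp [hl, hu]
      · have h1 : (1 / 2) * (L x + U x) ≤ (L x ^ 2 + U x ^ 2) / (L x + U x) := by
          rw [le_div_iff₀ h]
          nlinarith [sq_nonneg (L x - U x)]
        calc (1 / 2) * ((L x + U x) * p x) = ((1 / 2) * (L x + U x)) * p x := by ring
          _ ≤ (L x ^ 2 + U x ^ 2) / (L x + U x) * p x :=
            mul_le_mul_of_nonneg_right h1 (hp0 x)
    refine le_trans (le_of_eq ?_) hstep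
    have : ∑ x, (1 / 2) * ((L x + U x) * p x) = ∑ x, (1 / 2) * (p x - p x ^ 2) :=
      Finset.sum_congr rfl fun x _ => by
        have h := hLU x
        linear_combination (p x / 2) * h
    rw [this, ← Finset.mul_sum, Finset.sum_sub_distrib, hsum]
  · -- upper bound
    rw [hOsc]
    have hstep : ∑ x, (L x ^ 2 + U x ^ 2) / (L x + U x) * p x
        ≤ ∑ x, (p x * (L x + U x) - 2 * (p x * L x * U x)) := by
      refine Finset.sum_le_sum fun x _ => ?_
      rcases eq_or_lt_of_le (add_nonneg (hL0 x) (hU0 x)) with h | h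
      · have hl : L x = 0 := by nlinarith [hL0 x, hU0 x]
        have hu : U x = 0 := by nlinarith [hL0 x, hU0 x]
        simp [hl, hu]
      · rw [div_mul_eq_mul_div, div_le_iff₀ h]
        have hps : L x + p x + U x = 1 := hLU x
        have key : (p x * (L x + U x) - 2 * (p x * L x * U x)) * (L x + U x)
            - (L x ^ 2 + U x ^ 2) * p x = 2 * p x ^ 2 * L x * U x := by
          linear_combination (-(2 * p x * L x * U x)) * hps
        nlinarith [mul_nonneg (mul_nonneg (mul_nonneg (hp0 x) (hp0 x)) (hL0 x)) (hU0 x)]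
    refine le_trans hstep (le_of_eq ?_)
    have h1 : ∑ x, (p x * (L x + U x) - 2 * (p x * L x * U x))
        = ∑ x, (p x - p x ^ 2 - 2 * (p x * L x * U x)) :=
      Finset.sum_congr rfl fun x _ => by
        have h := hLU x
        linear_combination (p x) * h
    rw [h1]
    have h2 : ∑ x, (p x - p x ^ 2 - 2 * (p x * L x * U x))
        = (∑ x, p x) - A - 2 * ∑ x, p x * L x * U x := by
      rw [Finset.sum_sub_distrib, Finset.sum_sub_distrib, Finset.mul_sum, hA]
    rw [h2, hsum, hPLU]
    linarith [hCA, hDB]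

end Stmt11Aux

/-- for a probability measure `μ` supported on `[q]` with at
least two atoms, `(1/2)(1 − Σ p_x²) ≤ Osc(μ) ≤ (2/3)(1 − Σ p_x³)`. -/
theorem stmt11 (q : ℕ) (μ : Measure (Fin q)) [IsProbabilityMeasure μ]
    (h2 : ∃ x y : Fin q, x ≠ y ∧ 0 < μ {x} ∧ 0 < μ {y}) :
    (1 / 2) * (1 - ∑ x, (μ {x}).toReal ^ 2) ≤ Osc (fun x => (μ {x}).toReal)
      ∧ Osc (fun x => (μ {x}).toReal) ≤ (2 / 3) * (1 - ∑ x, (μ {x}).toReal ^ 3) := by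
  have hsum : ∑ x, (μ {x}).toReal = 1 := by
    have h1 : ∑ x : Fin q, μ {x} = 1 := by
      have := MeasureTheory.Measure.tsum_indicator_apply_singleton μ Set.univ MeasurableSet.univ
      simpa [tsum_fintype] using this
    have h2' : ∑ x : Fin q, (μ {x}).toReal = (∑ x : Fin q, μ {x}).toReal := by
      rw [ENNReal.toReal_sum fun x _ => measure_ne_top μ _]
    rw [h2', h1]; rfl
  exact Stmt11Aux.main (fun x => (μ {x}).toReal) (fun x => ENNReal.toReal_nonneg) hsum

end
end

section
/- Let a = (aᵢ)_{i∈ℤ} be a bilateral sequence of i.i.d. random variables with common distribution μ supported on [q] = {1,…,q}. For n ≥ 1 and 1 ≤ t ≤ n, let C_{n,t} be the event {a_{−n} = a_{−n+1} = ⋯ = a_{−n+t−1} ≠ a_{−n+t}}. Let F_{≥0} be the σ-field generated by the random variables T^{(k)}f = 2·1(a has a local maximum at index k) for k ≥ 0, and let G_{<−n} be the σ-field generated by {aᵢ : i < −n}. Then for any event A ∈ F_{≥0} and any t ≤ n, the event C_{n,t} ∩ A is independent of G_{<−n}. -/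
open MeasureTheory ProbabilityTheory Filter Finset

noncomputable section

attribute [local instance] Classical.propDecidable

/-- A bilateral sequence `x : ℤ → Fin q` has a local maximum at the index `k`
if for some `j < k`, `x j < x (j+1) = ⋯ = x k > x (k+1)`. -/
def HasLocalMaxZ {q : ℕ} (x : ℤ → Fin q) (k : ℤ) : Prop :=
  ∃ j < k, x j < x k ∧ (∀ i : ℤ, j < i → i ≤ k → x i = x k) ∧ x (k + 1) < x k

/-- `T^{(k)}f (a) = 2·1(a has a local maximum at index k)`. -/
def Tf {q : ℕ} {Ω : Type*} (a : ℤ → Ω → Fin q) (k : ℤ) (ω : Ω) : ℝ :=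
  if HasLocalMaxZ (fun i => a i ω) k then 2 else 0

/-- The σ-field `F_{≥0}` generated by the random variables `T^{(k)}f`, `k ≥ 0`. -/
def Fge0 {q : ℕ} {Ω : Type*} (a : ℤ → Ω → Fin q) : MeasurableSpace Ω :=
  ⨆ k : ℕ, MeasurableSpace.comap (Tf a k) inferInstance

/-- The σ-field `G_{<−n}` generated by the random variables `aᵢ`, `i < −n`. -/
def Glt {q : ℕ} {Ω : Type*} (a : ℤ → Ω → Fin q) (n : ℕ) : MeasurableSpace Ω :=
  ⨆ i : ℤ, ⨆ _ : i < -(n : ℤ), MeasurableSpace.comap (a i) inferInstance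

/-- The event `C_{n,t} = {a_{−n} = ⋯ = a_{−n+t−1} ≠ a_{−n+t}}`. -/
def Cevent {q : ℕ} {Ω : Type*} (a : ℤ → Ω → Fin q) (n t : ℕ) : Set Ω :=
  {ω | (∀ i : ℤ, -(n : ℤ) ≤ i → i ≤ -(n : ℤ) + t - 1 → a i ω = a (-(n : ℤ)) ω)
    ∧ a (-(n : ℤ)) ω ≠ a (-(n : ℤ) + t) ω}

def traceMS {Ω : Type*} (m : MeasurableSpace Ω) (C : Set Ω) : MeasurableSpace Ω where
  MeasurableSet' A := ∃ A', MeasurableSet[m] A' ∧ C ∩ A = C ∩ A'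
  measurableSet_empty := ⟨∅, MeasurableSet.empty, rfl⟩
  measurableSet_compl := by
    rintro A ⟨A', hA', hCA⟩
    refine ⟨A'ᶜ, hA'.compl, ?_⟩
    have h := Set.ext_iff.mp hCA
    ext ω
    have := h ω
    simp only [Set.mem_inter_iff, Set.mem_compl_iff] at *
    tauto
  measurableSet_iUnion := by
    intro f hf
    choose g hg1 hg2 using hf
    refine ⟨⋃ i, g i, MeasurableSet.iUnion hg1, ?_⟩
    simp only [Set.inter_iUnion]
    exact Set.iUnion_congr hg2

lemma key_lemma {q n t : ℕ} (ht1 : 1 ≤ t) (htn : t ≤ n) (x : ℤ → Fin q) (k : ℕ)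
    (hC : (∀ i : ℤ, -(n : ℤ) ≤ i → i ≤ -(n : ℤ) + t - 1 → x i = x (-(n : ℤ)))
      ∧ x (-(n : ℤ)) ≠ x (-(n : ℤ) + t)) :
    HasLocalMaxZ x k ↔ HasLocalMaxZ (fun i => x (max i (-(n : ℤ)))) k := by
  set N : ℤ := -(n : ℤ) with hN
  have hNk : N ≤ (k : ℤ) := by omega
  have hmax : ∀ i : ℤ, N ≤ i → max i N = i := fun i hi => max_eq_left hi
  constructor
  · rintro ⟨j, hj, hlt, heq, hlt2⟩
    have hjN : N ≤ j := by
      by_contra hjN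
      push_neg at hjN
      have h1 : x (N + t) = x k := heq (N + t) (by omega) (by omega)
      have h2 : x (N + t - 1) = x k := heq (N + t - 1) (by omega) (by omega)
      have h3 : x (N + t - 1) = x N := hC.1 _ (by omega) (by omega)
      exact hC.2 (by rw [← h3, h2, ← h1])
    refine ⟨j, hj, ?_, ?_, ?_⟩
    · simpa [hmax j hjN, hmax k hNk] using hlt
    · intro i hi1 hi2
      simp only [hmax i (by omega), hmax k hNk]
      exact heq i hi1 hi2
    · simpa [hmax (k+1) (by omega), hmax k hNk] using hlt2
  · rintro ⟨j, hj, hlt, heq, hlt2⟩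
    have hjN : N ≤ j := by
      by_contra hjN
      push_neg at hjN
      have h1 : x (N + t) = x k := by
        have := heq (N + t) (by omega) (by omega)
        simpa [hmax (N+t) (by omega), hmax k hNk] using this
      have h2 : x (N + t - 1) = x k := by
        have := heq (N + t - 1) (by omega) (by omega)
        simpa [hmax (N+t-1) (by omega), hmax k hNk] using this
      have h3 : x (N + t - 1) = x N := hC.1 _ (by omega) (by omega)
      exact hC.2 (by rw [← h3, h2, ← h1])
    refine ⟨j, hj, ?_, ?_, ?_⟩
    · simpa [hmax j hjN, hmax k hNk] using hlt
    · intro i hi1 hi2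
      have := heq i hi1 hi2
      simpa [hmax i (by omega), hmax k hNk] using this
    · simpa [hmax (k+1) (by omega), hmax k hNk] using hlt2

/-- for a bilateral i.i.d. sequence with common distribution `μ`
supported on `[q]`, any `A ∈ F_{≥0}` and any `1 ≤ t ≤ n`, the event
`C_{n,t} ∩ A` is independent of the σ-field `G_{<−n}`. -/
theorem stmt14
    {Ω : Type*} [MeasurableSpace Ω] (P : Measure Ω) [IsProbabilityMeasure P]
    (q : ℕ) (μ : Measure (Fin q)) [IsProbabilityMeasure μ]
    (a : ℤ → Ω → Fin q)
    (hmeas : ∀ i, Measurable (a i))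
    (hindep : iIndepFun a P)
    (hid : ∀ i, Measure.map (a i) P = μ)
    (n t : ℕ) (ht1 : 1 ≤ t) (htn : t ≤ n)
    (A : Set Ω) (hA : MeasurableSet[Fge0 a] A) :
    ∀ B : Set Ω, MeasurableSet[Glt a n] B →
      P ((Cevent a n t ∩ A) ∩ B) = P (Cevent a n t ∩ A) * P B := by
  intro B hB
  set N : ℤ := -(n : ℤ) with hN
  set Mge : MeasurableSpace Ω :=
    ⨆ i : ℤ, ⨆ _ : N ≤ i, MeasurableSpace.comap (a i) inferInstance with hMge
  have hma : ∀ i : ℤ, N ≤ i → Measurable[Mge] (a i) := by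
    intro i hi
    rw [measurable_iff_comap_le]
    exact le_iSup_of_le i (le_iSup_of_le hi le_rfl)
  have hpair : ∀ (i j : ℤ), N ≤ i → N ≤ j → ∀ S : Set (Fin q × Fin q),
      MeasurableSet[Mge] {ω | (a i ω, a j ω) ∈ S} := by
    intro i j hi hj S
    have hm : Measurable[Mge] (fun ω => (a i ω, a j ω)) :=
      Measurable.prodMk (hma i hi) (hma j hj)
    exact hm (Set.toFinite S).measurableSet
  -- Cevent is Mge-measurable
  have hCmeas : MeasurableSet[Mge] (Cevent a n t) := by
    have h1 : MeasurableSet[Mge]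
        {ω | ∀ i : ℤ, N ≤ i → i ≤ N + t - 1 → a i ω = a N ω} := by
      have he : {ω | ∀ i : ℤ, N ≤ i → i ≤ N + t - 1 → a i ω = a N ω}
          = ⋂ i : ℤ, {ω | N ≤ i → i ≤ N + t - 1 → a i ω = a N ω} := by
        ext ω; simp [Set.mem_iInter]
      rw [he]
      refine MeasurableSet.iInter fun i => ?_
      by_cases hi : N ≤ i ∧ i ≤ N + t - 1
      · have he2 : {ω | N ≤ i → i ≤ N + t - 1 → a i ω = a N ω}
            = {ω | (a i ω, a N ω) ∈ {p : Fin q × Fin q | p.1 = p.2}} := by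
          ext ω; simp [hi.1, hi.2]
        rw [he2]; exact hpair i N hi.1 le_rfl _
      · have he2 : {ω | N ≤ i → i ≤ N + t - 1 → a i ω = a N ω} = Set.univ := by
          ext ω
          simp only [Set.mem_setOf_eq, Set.mem_univ, iff_true]
          intro h1 h2; exact absurd ⟨h1, h2⟩ hi
        rw [he2]; exact MeasurableSet.univ
    have h2 : MeasurableSet[Mge] {ω | (a N ω, a (N + t) ω) ∈
        {p : Fin q × Fin q | p.1 ≠ p.2}} := hpair N (N + t) le_rfl (by omega) _
    exact h1.inter h2
  -- the local max event for the reflected sequence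
  have hD : ∀ k : ℕ, MeasurableSet[Mge]
      {ω | HasLocalMaxZ (fun i => a (max i N) ω) (k : ℤ)} := by
    intro k
    have he : {ω | HasLocalMaxZ (fun i => a (max i N) ω) (k : ℤ)}
        = ⋃ j : ℤ, ⋃ _ : j < (k : ℤ),
          (({ω | (a (max j N) ω, a (max (k : ℤ) N) ω) ∈ {p : Fin q × Fin q | p.1 < p.2}}
            ∩ ⋂ i : ℤ, {ω | j < i → i ≤ (k : ℤ) →
                (a (max i N) ω, a (max (k : ℤ) N) ω) ∈ {p : Fin q × Fin q | p.1 = p.2}})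
            ∩ {ω | (a (max ((k : ℤ) + 1) N) ω, a (max (k : ℤ) N) ω)
                ∈ {p : Fin q × Fin q | p.1 < p.2}}) := by
      ext ω
      simp only [HasLocalMaxZ, Set.mem_setOf_eq, Set.mem_iUnion, Set.mem_inter_iff,
        Set.mem_iInter]
      constructor
      · rintro ⟨j, hj, h1, h2, h3⟩
        exact ⟨j, hj, ⟨⟨h1, fun i hi1 hi2 => h2 i hi1 hi2⟩, h3⟩⟩
      · rintro ⟨j, hj, ⟨⟨h1, h2⟩, h3⟩⟩
        exact ⟨j, hj, h1, fun i hi1 hi2 => h2 i hi1 hi2, h3⟩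
    rw [he]
    refine MeasurableSet.iUnion fun j => MeasurableSet.iUnion fun _ => ?_
    refine MeasurableSet.inter (MeasurableSet.inter ?_ ?_) ?_
    · exact hpair _ _ (le_max_right _ _) (le_max_right _ _) _
    · refine MeasurableSet.iInter fun i => ?_
      by_cases hi : j < i ∧ i ≤ (k : ℤ)
      · have he2 : {ω | j < i → i ≤ (k : ℤ) →
            (a (max i N) ω, a (max (k : ℤ) N) ω) ∈ {p : Fin q × Fin q | p.1 = p.2}}
            = {ω | (a (max i N) ω, a (max (k : ℤ) N) ω)
                ∈ {p : Fin q × Fin q | p.1 = p.2}} := by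
          ext ω; simp [hi.1, hi.2]
        rw [he2]; exact hpair _ _ (le_max_right _ _) (le_max_right _ _) _
      · have he2 : {ω | j < i → i ≤ (k : ℤ) →
            (a (max i N) ω, a (max (k : ℤ) N) ω) ∈ {p : Fin q × Fin q | p.1 = p.2}}
            = Set.univ := by
          ext ω
          simp only [Set.mem_setOf_eq, Set.mem_univ, iff_true]
          intro h1 h2; exact absurd ⟨h1, h2⟩ hi
        rw [he2]; exact MeasurableSet.univ
    · exact hpair _ _ (le_max_right _ _) (le_max_right _ _) _
  have hTf' : ∀ k : ℕ, Measurable[Mge] (Tf (fun i => a (max i N)) (k : ℤ)) := by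
    intro k
    unfold Tf
    exact Measurable.ite (hD k) measurable_const measurable_const
  -- trace argument
  have htrace : Fge0 a ≤ traceMS Mge (Cevent a n t) := by
    refine iSup_le fun k => ?_
    intro S hS
    obtain ⟨s, hs, rfl⟩ := hS
    refine ⟨Tf (fun i => a (max i N)) (k : ℤ) ⁻¹' s, (hTf' k) hs, ?_⟩
    ext ω
    simp only [Set.mem_inter_iff, Set.mem_preimage]
    refine and_congr_right fun hω => ?_
    have hTfeq : Tf a (k : ℤ) ω = Tf (fun i => a (max i N)) (k : ℤ) ω := by
      unfold Tf
      have hk := key_lemma ht1 htn (fun i => a i ω) k hω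
      simp only [hN] at hk ⊢
      rw [if_congr hk rfl rfl]
    rw [hTfeq]
  obtain ⟨A', hA'm, hCA⟩ := htrace A hA
  -- independence of Mge and Glt
  have hIndep : Indep Mge (Glt a n) P := by
    have h := indep_iSup_of_disjoint (m := fun i : ℤ => MeasurableSpace.comap (a i) inferInstance)
      (fun i => (hmeas i).comap_le) hindep.iIndep
      (S := {i : ℤ | N ≤ i}) (T := {i : ℤ | i < N})
      (by rw [Set.disjoint_left]; intro i hi1 hi2; simp only [Set.mem_setOf_eq] at *; omega)
    exact h
  rw [hCA]
  exact (Indep_iff _ _ _).mp hIndep _ _ (hCmeas.inter hA'm) hB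

end
end

section
/- Let a = (aᵢ)_{i∈ℤ} be a bilateral sequence of i.i.d. random variables with common distribution μ supported on [q] = {1,…,q}, and set κ = max_{x∈[q]} μ({x}). Let F₀ be the σ-field generated by the random variables T^{(k)}f = 2·1(a has a local maximum at index k) for k ≥ 0, and let G_{<−n} be the σ-field generated by {aᵢ : i < −n}. Then for any event A ∈ F₀ and any event B ∈ G_{<−n} with positive probability, |Prob(A | B) − Prob(A)| ≤ 2q·κⁿ. -/
open MeasureTheory ProbabilityTheory Filter Finset

noncomputable section

attribute [local instance] Classical.propDecidable

/-! ### Auxiliary lemmas -/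

/-- Any binary relation between two `Fin q`-valued measurable functions gives
a measurable set. -/
lemma measurableSet_rel {q : ℕ} {Ω : Type*} {m : MeasurableSpace Ω}
    {f g : Ω → Fin q} (hf : Measurable[m] f) (hg : Measurable[m] g)
    (r : Fin q → Fin q → Prop) : MeasurableSet[m] {ω | r (f ω) (g ω)} := by
  have h : {ω | r (f ω) (g ω)} = (fun ω => (f ω, g ω)) ⁻¹' {p | r p.1 p.2} := rfl
  rw [h]
  exact (hf.prodMk hg) (Set.Finite.measurableSet (Set.toFinite _))

lemma measurableSet_hlm {q : ℕ} {Ω : Type*} {m : MeasurableSpace Ω}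
    (c : ℤ → Ω → Fin q) (hc : ∀ i, Measurable[m] (c i)) (k : ℤ) :
    MeasurableSet[m] {ω | HasLocalMaxZ (fun i => c i ω) k} := by
  have h : {ω | HasLocalMaxZ (fun i => c i ω) k}
      = ⋃ (j : ℤ) (_ : j < k), ({ω | c j ω < c k ω}
          ∩ (⋂ (i : ℤ) (_ : j < i) (_ : i ≤ k), {ω | c i ω = c k ω})
          ∩ {ω | c (k+1) ω < c k ω}) := by
    ext ω
    simp only [Set.mem_setOf_eq, Set.mem_iUnion, Set.mem_inter_iff, Set.mem_iInter,
      HasLocalMaxZ]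
    tauto
  rw [h]
  refine MeasurableSet.iUnion fun j => MeasurableSet.iUnion fun _ => ?_
  refine (((measurableSet_rel (hc j) (hc k) (· < ·)).inter ?_).inter
    (measurableSet_rel (hc (k+1)) (hc k) (· < ·)))
  exact MeasurableSet.iInter fun i => MeasurableSet.iInter fun _ =>
    MeasurableSet.iInter fun _ => measurableSet_rel (hc i) (hc k) (· = ·)

lemma measurable_Tf {q : ℕ} {Ω : Type*} {m : MeasurableSpace Ω}
    (c : ℤ → Ω → Fin q) (hc : ∀ i, Measurable[m] (c i)) (k : ℤ) :
    Measurable[m] (Tf c k) :=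
  Measurable.ite (measurableSet_hlm c hc k) measurable_const measurable_const

lemma Fge0_le {q : ℕ} {Ω : Type*} {m : MeasurableSpace Ω}
    (c : ℤ → Ω → Fin q) (hc : ∀ i, Measurable[m] (c i)) : Fge0 c ≤ m :=
  iSup_le fun k => (measurable_Tf c hc k).comap_le

/-- Outside the event that `x` is constant on `[-n, 0]`, whether `x` has a local
maximum at `k ≥ 0` only depends on the coordinates `≥ -n`. -/
lemma hlm_congr {q : ℕ} (n : ℕ) (x : ℤ → Fin q)
    (hE : ¬ ∀ i : ℤ, -(n:ℤ) ≤ i → i ≤ 0 → x i = x 0) (k : ℕ) :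
    HasLocalMaxZ x k ↔ HasLocalMaxZ (fun i => x (max i (-(n:ℤ)))) k := by
  set N : ℤ := -(n:ℤ) with hN
  have hN0 : N ≤ 0 := by simp [hN]
  have hk0 : (0:ℤ) ≤ (k:ℤ) := Int.ofNat_nonneg k
  have hyk : max (k:ℤ) N = (k:ℤ) := max_eq_left (le_trans hN0 hk0)
  have hyk1 : max ((k:ℤ)+1) N = (k:ℤ)+1 := max_eq_left (by omega)
  constructor
  · rintro ⟨j, hjk, hjlt, hrun, hk1⟩
    by_cases hj : N ≤ j
    · refine ⟨j, hjk, ?_, ?_, ?_⟩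
      · simpa [max_eq_left hj, hyk] using hjlt
      · intro i hji hik
        have hi : max i N = i := max_eq_left (le_trans hj (le_of_lt hji))
        simpa [hi, hyk] using hrun i hji hik
      · simpa [hyk, hyk1] using hk1
    · exfalso
      push_neg at hj
      apply hE
      intro i hi hi0
      have h1 : x i = x k := hrun i (lt_of_lt_of_le hj hi) (le_trans hi0 hk0)
      have h2 : x 0 = x k := hrun 0 (lt_of_lt_of_le hj hN0) hk0
      rw [h1, h2]
  · rintro ⟨j, hjk, hjlt, hrun, hk1⟩
    by_cases hj : N ≤ j
    · refine ⟨j, hjk, ?_, ?_, ?_⟩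
      · simpa [max_eq_left hj, hyk] using hjlt
      · intro i hji hik
        have hi : max i N = i := max_eq_left (le_trans hj (le_of_lt hji))
        have := hrun i hji hik
        simpa [hi, hyk] using this
      · simpa [hyk, hyk1] using hk1
    · exfalso
      push_neg at hj
      apply hE
      intro i hi hi0
      have h1 := hrun i (lt_of_lt_of_le hj hi) (le_trans hi0 hk0)
      have h2 := hrun 0 (lt_of_lt_of_le hj hN0) hk0
      simp only [max_eq_left hi, max_eq_left hN0, hyk] at h1 h2
      rw [h1, h2]

/-- Transfer of measurable sets between σ-algebras generated by the `Tf`'s of two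
sequences which agree outside an exceptional set `E`. -/
lemma Fge0_transfer {q : ℕ} {Ω : Type*} (c d : ℤ → Ω → Fin q) (E : Set Ω)
    (h : ∀ ω ∉ E, ∀ k : ℕ, Tf c k ω = Tf d k ω)
    {A : Set Ω} (hA : MeasurableSet[Fge0 c] A) :
    ∃ A', MeasurableSet[Fge0 d] A' ∧ A ∩ Eᶜ = A' ∩ Eᶜ := by
  let m' : MeasurableSpace Ω :=
    { MeasurableSet' := fun A => ∃ A', MeasurableSet[Fge0 d] A' ∧ A ∩ Eᶜ = A' ∩ Eᶜ
      measurableSet_empty := ⟨∅, @MeasurableSet.empty _ (Fge0 d), rfl⟩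
      measurableSet_compl := by
        rintro s ⟨s', hs', hss⟩
        refine ⟨s'ᶜ, hs'.compl, ?_⟩
        ext ω
        have := Set.ext_iff.1 hss ω
        simp only [Set.mem_inter_iff, Set.mem_compl_iff] at this ⊢
        tauto
      measurableSet_iUnion := by
        intro f hf
        choose g hg hEq using hf
        refine ⟨⋃ i, g i, MeasurableSet.iUnion hg, ?_⟩
        rw [Set.iUnion_inter, Set.iUnion_inter]
        exact Set.iUnion_congr hEq }
  have hle : Fge0 c ≤ m' := by
    refine iSup_le fun k => ?_
    rintro A ⟨s, hs, rfl⟩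
    refine ⟨Tf d k ⁻¹' s,
      le_iSup (fun k : ℕ => MeasurableSpace.comap (Tf d (k:ℤ)) inferInstance) k
        (Tf d k ⁻¹' s) ⟨s, hs, rfl⟩, ?_⟩
    ext ω
    simp only [Set.mem_inter_iff, Set.mem_preimage, Set.mem_compl_iff]
    constructor
    · rintro ⟨h1, h2⟩; rw [h ω h2 k] at h1; exact ⟨h1, h2⟩
    · rintro ⟨h1, h2⟩; rw [← h ω h2 k] at h1; exact ⟨h1, h2⟩
  exact hle A hA

/-- for a bilateral i.i.d. sequence with common distribution `μ`
supported on `[q]`, `κ = max_x μ({x})`, any event `A ∈ F₀` and any event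
`B ∈ G_{<−n}` of positive probability, `|P(A | B) − P(A)| ≤ 2q·κⁿ`. -/
theorem stmt15
    {Ω : Type*} [MeasurableSpace Ω] (P : Measure Ω) [IsProbabilityMeasure P]
    (q : ℕ) (μ : Measure (Fin q)) [IsProbabilityMeasure μ]
    (a : ℤ → Ω → Fin q)
    (hmeas : ∀ i, Measurable (a i))
    (hindep : iIndepFun a P)
    (hid : ∀ i, Measure.map (a i) P = μ)
    (n : ℕ)
    (A : Set Ω) (hA : MeasurableSet[Fge0 a] A)
    (B : Set Ω) (hB : MeasurableSet[Glt a n] B) (hBpos : 0 < P B) :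
    |(P (A ∩ B)).toReal / (P B).toReal - (P A).toReal|
      ≤ 2 * q * (⨆ x : Fin q, (μ {x}).toReal) ^ n := by
  -- dispose of the degenerate case q = 0
  rcases Nat.eq_zero_or_pos q with hq | hq
  · exfalso
    subst hq
    have h1 : μ Set.univ = 1 := measure_univ
    rw [Set.univ_eq_empty_iff.2 inferInstance, measure_empty] at h1
    exact zero_ne_one h1
  set κ : ℝ := ⨆ x : Fin q, (μ {x}).toReal with hκ
  have hκx : ∀ x : Fin q, (μ {x}).toReal ≤ κ :=
    fun x => le_ciSup (f := fun x : Fin q => (μ {x}).toReal)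
      (Set.Finite.bddAbove (Set.finite_range _)) x
  have hq1 : Nonempty (Fin q) := ⟨⟨0, hq⟩⟩
  have hκ0 : 0 ≤ κ := le_trans ENNReal.toReal_nonneg (hκx hq1.some)
  -- the two halves of the coordinate σ-algebras
  set S : Set ℤ := {i : ℤ | -(n:ℤ) ≤ i} with hS
  set T : Set ℤ := {i : ℤ | i < -(n:ℤ)} with hT
  set mP : MeasurableSpace Ω :=
    ⨆ i ∈ S, MeasurableSpace.comap (a i) inferInstance with hmP
  set mM : MeasurableSpace Ω :=
    ⨆ i ∈ T, MeasurableSpace.comap (a i) inferInstance with hmM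
  have haP : ∀ i : ℤ, -(n:ℤ) ≤ i → Measurable[mP] (a i) := by
    intro i hi
    exact Measurable.of_comap_le
      (le_iSup₂ (f := fun (i : ℤ) (_ : i ∈ S) =>
        MeasurableSpace.comap (a i) inferInstance) i hi)
  have hIndep : Indep mP mM P :=
    indep_iSup_of_disjoint (fun i => (hmeas i).comap_le) hindep
      (Set.disjoint_left.2 fun {x} hxS hxT => by
        simp only [hS, hT, Set.mem_setOf_eq] at hxS hxT; omega)
  -- the exceptional event E
  set E : Set Ω := {ω | ∀ i : ℤ, -(n:ℤ) ≤ i → i ≤ 0 → a i ω = a 0 ω} with hE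
  have hEmP : MeasurableSet[mP] E := by
    have : E = ⋂ (i : ℤ) (_ : -(n:ℤ) ≤ i) (_ : i ≤ 0), {ω | a i ω = a 0 ω} := by
      ext ω; simp [hE]
    rw [this]
    exact MeasurableSet.iInter fun i => MeasurableSet.iInter fun hi =>
      MeasurableSet.iInter fun hi0 =>
        measurableSet_rel (haP i hi) (haP 0 (by omega)) (· = ·)
  -- the modified sequence b
  set b : ℤ → Ω → Fin q := fun i ω => a (max i (-(n:ℤ))) ω with hb
  have hbP : ∀ i, Measurable[mP] (b i) := fun i => haP _ (le_max_right _ _)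
  have hFb : Fge0 b ≤ mP := Fge0_le b hbP
  -- Tf a and Tf b agree outside E
  have hTf : ∀ ω ∉ E, ∀ k : ℕ, Tf a k ω = Tf b k ω := by
    intro ω hω k
    have hcongr := hlm_congr n (fun i => a i ω) hω k
    simp only [Tf]
    by_cases h : HasLocalMaxZ (fun i => a i ω) k
    · rw [if_pos h, if_pos (hcongr.1 h)]
    · rw [if_neg h, if_neg (fun h' => h (hcongr.2 h'))]
  obtain ⟨A', hA'meas, hAA'⟩ := Fge0_transfer a b E hTf hA
  have hA'mP : MeasurableSet[mP] A' := hFb A' hA'meas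
  have hBmM : MeasurableSet[mM] B := hB
  -- independence consequences
  rw [Indep_iff] at hIndep
  have hA'B : P (A' ∩ B) = P A' * P B := hIndep A' B hA'mP hBmM
  have hEB : P (E ∩ B) = P E * P B := hIndep E B hEmP hBmM
  -- bound on P E
  have hPE : (P E).toReal ≤ κ ^ n := by
    have hsub : E ⊆ ⋃ x : Fin q, ⋂ i ∈ Finset.Icc (-(n:ℤ)) 0, (a i) ⁻¹' {x} := by
      intro ω hω
      refine Set.mem_iUnion.2 ⟨a 0 ω, ?_⟩
      refine Set.mem_iInter₂.2 fun i hi => ?_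
      rw [Finset.mem_Icc] at hi
      exact hω i hi.1 hi.2
    have hcard : (Finset.Icc (-(n:ℤ)) 0).card = n + 1 := by
      rw [Int.card_Icc]; omega
    have hone : ∀ (x : Fin q) (i : ℤ), P ((a i) ⁻¹' {x}) = μ {x} := by
      intro x i
      rw [← hid i, Measure.map_apply (hmeas i) (MeasurableSet.singleton x)]
    have hprod : ∀ x : Fin q,
        P (⋂ i ∈ Finset.Icc (-(n:ℤ)) 0, (a i) ⁻¹' {x}) = μ {x} ^ (n + 1) := by
      intro x
      rw [hindep.measure_inter_preimage_eq_mul (Finset.Icc (-(n:ℤ)) 0)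
        (sets := fun _ => {x}) (fun i _ => MeasurableSet.singleton x)]
      rw [Finset.prod_congr rfl fun i _ => hone x i, Finset.prod_const, hcard]
    have h1 : P E ≤ ∑ x : Fin q, μ {x} ^ (n + 1) := by
      refine le_trans (measure_mono hsub) ?_
      refine le_trans (measure_iUnion_fintype_le P _) ?_
      exact le_of_eq (Finset.sum_congr rfl fun x _ => hprod x)
    have hfin : ∀ x : Fin q, μ {x} ^ (n+1) ≠ ⊤ :=
      fun x => ENNReal.pow_ne_top (measure_ne_top μ _)
    have h2 : (P E).toReal ≤ ∑ x : Fin q, (μ {x}).toReal ^ (n + 1) := by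
      refine le_trans (ENNReal.toReal_mono ?_ h1) ?_
      · exact (ENNReal.sum_lt_top.2 fun x _ => (hfin x).lt_top).ne
      · rw [ENNReal.toReal_sum (fun x _ => hfin x)]
        exact le_of_eq (Finset.sum_congr rfl fun x _ => ENNReal.toReal_pow _ _)
    refine le_trans h2 ?_
    have h3 : ∀ x : Fin q, (μ {x}).toReal ^ (n + 1) ≤ κ ^ n * (μ {x}).toReal := by
      intro x
      rw [pow_succ]
      exact mul_le_mul_of_nonneg_right
        (pow_le_pow_left₀ ENNReal.toReal_nonneg (hκx x) n) ENNReal.toReal_nonneg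
    refine le_trans (Finset.sum_le_sum fun x _ => h3 x) ?_
    rw [← Finset.mul_sum]
    have hsum1 : ∑ x : Fin q, (μ {x}).toReal = 1 := by
      rw [← ENNReal.toReal_sum (fun x _ => measure_ne_top μ _)]
      have : ∑ x : Fin q, μ {x} = μ Set.univ := by
        rw [← Set.biUnion_of_singleton (Set.univ : Set (Fin q))]
        rw [Set.biUnion_univ]
        rw [← measure_biUnion_finset
          (fun x _ y _ hxy => Set.disjoint_singleton.2 hxy)
          (fun x _ => MeasurableSet.singleton x)]
        congr 1
        simp
      rw [this, measure_univ, ENNReal.toReal_one]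
    rw [hsum1, mul_one]
  -- the two approximations
  have hAsub : A ⊆ A' ∪ E := by
    intro ω hω
    by_cases hωE : ω ∈ E
    · exact Or.inr hωE
    · exact Or.inl (Set.ext_iff.1 hAA' ω |>.1 ⟨hω, hωE⟩).1
  have hA'sub : A' ⊆ A ∪ E := by
    intro ω hω
    by_cases hωE : ω ∈ E
    · exact Or.inr hωE
    · exact Or.inl (Set.ext_iff.1 hAA' ω |>.2 ⟨hω, hωE⟩).1
  -- real-valued quantities
  set β : ℝ := (P B).toReal with hβ
  have hβpos : 0 < β := ENNReal.toReal_pos hBpos.ne' (measure_ne_top P B)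
  have htr : ∀ s : Set Ω, (P s) ≠ ⊤ := fun s => measure_ne_top P s
  have habs1 : |(P (A ∩ B)).toReal - (P (A' ∩ B)).toReal| ≤ (P E).toReal * β := by
    have h1 : P (A ∩ B) ≤ P (A' ∩ B) + P (E ∩ B) := by
      refine le_trans (measure_mono ?_) (measure_union_le _ _)
      rw [← Set.union_inter_distrib_right]
      exact Set.inter_subset_inter_left _ hAsub
    have h2 : P (A' ∩ B) ≤ P (A ∩ B) + P (E ∩ B) := by
      refine le_trans (measure_mono ?_) (measure_union_le _ _)
      rw [← Set.union_inter_distrib_right]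
      exact Set.inter_subset_inter_left _ hA'sub
    have hEBr : (P (E ∩ B)).toReal = (P E).toReal * β := by
      rw [hEB, ENNReal.toReal_mul]
    rw [abs_sub_le_iff]
    constructor
    · rw [← hEBr]
      have := ENNReal.toReal_mono (by
        exact (ENNReal.add_lt_top.2 ⟨(htr _).lt_top, (htr _).lt_top⟩).ne) h1
      rw [ENNReal.toReal_add (htr _) (htr _)] at this
      linarith
    · rw [← hEBr]
      have := ENNReal.toReal_mono (by
        exact (ENNReal.add_lt_top.2 ⟨(htr _).lt_top, (htr _).lt_top⟩).ne) h2
      rw [ENNReal.toReal_add (htr _) (htr _)] at this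
      linarith
  have habs2 : |(P A').toReal - (P A).toReal| ≤ (P E).toReal := by
    have h1 : P A ≤ P A' + P E :=
      le_trans (measure_mono hAsub) (measure_union_le _ _)
    have h2 : P A' ≤ P A + P E :=
      le_trans (measure_mono hA'sub) (measure_union_le _ _)
    rw [abs_sub_le_iff]
    constructor
    · have := ENNReal.toReal_mono (by
        exact (ENNReal.add_lt_top.2 ⟨(htr _).lt_top, (htr _).lt_top⟩).ne) h2
      rw [ENNReal.toReal_add (htr _) (htr _)] at this
      linarith
    · have := ENNReal.toReal_mono (by
        exact (ENNReal.add_lt_top.2 ⟨(htr _).lt_top, (htr _).lt_top⟩).ne) h1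
      rw [ENNReal.toReal_add (htr _) (htr _)] at this
      linarith
  have hA'Br : (P (A' ∩ B)).toReal = (P A').toReal * β := by
    rw [hA'B, ENNReal.toReal_mul]
  -- put everything together
  have hkey : (P (A ∩ B)).toReal / β - (P A).toReal
      = ((P (A ∩ B)).toReal - (P (A' ∩ B)).toReal) / β
        + ((P A').toReal - (P A).toReal) := by
    rw [hA'Br]
    field_simp
    ring
  rw [hkey]
  have hstep : |((P (A ∩ B)).toReal - (P (A' ∩ B)).toReal) / β
      + ((P A').toReal - (P A).toReal)|
      ≤ (P E).toReal + (P E).toReal := by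
    refine le_trans (abs_add_le _ _) (add_le_add ?_ habs2)
    rw [abs_div, abs_of_pos hβpos]
    rw [div_le_iff₀ hβpos]
    linarith [habs1]
  refine le_trans hstep ?_
  have hq1' : (1:ℝ) ≤ q := by exact_mod_cast hq
  have hκn : 0 ≤ κ ^ n := pow_nonneg hκ0 n
  nlinarith [hPE, hκn, hq1']


end
end

section
/- Let (x_k)_{k≥0} be an ergodic Markov chain on the finite linearly ordered state space [q] = {1,…,q}, with transition probabilities p_{r,s} (with p_{r,r} < 1 for all r) and stationary distribution π, started at stationarity. Define (y_k)_{k≥0} by y₀ = 1; y_{k+1} = 1 if x_{k+1} > x_k, or if x_{k+1} = x_k and y_k = 1; y_{k+1} = −1 if x_{k+1} < x_k, or if x_{k+1} = x_k and y_k = −1. Then the process (x_k, y_k)_{k≥0} is a Markov chain with transition probabilities p_{(r,±1)→(s,1)} = p_{r,s}·1(s > r), p_{(r,1)→(r,1)} = p_{r,r}, p_{(r,±1)→(s,−1)} = p_{r,s}·1(s < r), p_{(r,−1)→(r,−1)} = p_{r,r}, and the measure given by π_{(r,1)} = (1 − p_{r,r})^{-1}·Σ_{s<r} π_s p_{s,r}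 and π_{(r,−1)} = (1 − p_{r,r})^{-1}·Σ_{s>r} π_s p_{s,r} is stationary for this chain. -/
open MeasureTheory ProbabilityTheory Filter Finset

noncomputable section

/-- The gradient process `(y_k)`: `y₀ = 1` (here `true`); `y_{k+1} = 1` if
`x_{k+1} > x_k`, or if `x_{k+1} = x_k` and `y_k = 1`; `y_{k+1} = −1` (here
`false`) if `x_{k+1} < x_k`, or if `x_{k+1} = x_k` and `y_k = −1`. -/
def ygrad {Ω : Type*} {q : ℕ} (x : ℕ → Ω → Fin q) : ℕ → Ω → Bool
  | 0, _ => true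
  | k + 1, ω =>
    if x k ω < x (k + 1) ω then true
    else if x (k + 1) ω < x k ω then false
    else ygrad x k ω

/-- The transition probabilities of the lifted chain `(x_k, y_k)`:
`p_{(r,±1)→(s,1)} = p_{r,s}·1(s > r)`, `p_{(r,1)→(r,1)} = p_{r,r}`,
`p_{(r,±1)→(s,−1)} = p_{r,s}·1(s < r)`, `p_{(r,−1)→(r,−1)} = p_{r,r}`. -/
def Qtrans {q : ℕ} (p : Fin q → Fin q → ℝ) : Fin q × Bool → Fin q × Bool → ℝ :=
  fun re se' =>
    if se'.2 then (if re.1 < se'.1 ∨ (re.1 = se'.1 ∧ re.2 = true) then p re.1 se'.1 else 0)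
    else (if se'.1 < re.1 ∨ (re.1 = se'.1 ∧ re.2 = false) then p re.1 se'.1 else 0)

/-- The measure `π_{(r,1)} = (1 − p_{r,r})⁻¹ Σ_{s<r} π_s p_{s,r}`,
`π_{(r,−1)} = (1 − p_{r,r})⁻¹ Σ_{s>r} π_s p_{s,r}` on the lifted state space. -/
def piLift {q : ℕ} (p : Fin q → Fin q → ℝ) (π : Fin q → ℝ) : Fin q × Bool → ℝ :=
  fun re =>
    if re.2 then (1 - p re.1 re.1)⁻¹ * ∑ s ∈ Finset.univ.filter (fun s => s < re.1), π s * p s re.1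
    else (1 - p re.1 re.1)⁻¹ * ∑ s ∈ Finset.univ.filter (fun s => re.1 < s), π s * p s re.1

def ynext {q : ℕ} (r : Fin q) (b : Bool) (s : Fin q) : Bool :=
  if r < s then true else if s < r then false else b

lemma Qtrans_eq_of_eq {q : ℕ} (p : Fin q → Fin q → ℝ) (r : Fin q) (b : Bool) (s : Fin q) :
    Qtrans p (r, b) (s, ynext r b s) = p r s := by
  rcases lt_trichotomy r s with h | h | h
  · simp [Qtrans, ynext, h]
  · cases b <;> simp [Qtrans, ynext, h, lt_irrefl]
  · simp [Qtrans, ynext, h, lt_asymm h]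

lemma Qtrans_eq_zero {q : ℕ} (p : Fin q → Fin q → ℝ) (r : Fin q) (b : Bool) (s : Fin q)
    (e : Bool) (hne : e ≠ ynext r b s) : Qtrans p (r, b) (s, e) = 0 := by
  rcases lt_trichotomy r s with h | h | h
  · have : e = false := by cases e <;> simp_all [ynext, h]
    simp [Qtrans, this, h.ne, lt_asymm h]
  · have : e = !b := by cases e <;> cases b <;> simp_all [ynext, h, lt_irrefl]
    cases b <;> simp_all [Qtrans, h, lt_irrefl]
  · have : e = true := by cases e <;> simp_all [ynext, h, lt_asymm h]
    simp [Qtrans, this, h.ne', lt_asymm h]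

lemma ygrad_succ {Ω : Type*} {q : ℕ} (x : ℕ → Ω → Fin q) (k : ℕ) (ω : Ω) :
    ygrad x (k + 1) ω = ynext (x k ω) (ygrad x k ω) (x (k + 1) ω) := rfl

def yOf {q : ℕ} (h1 : ℕ → Fin q) : ℕ → Bool
  | 0 => true
  | k + 1 => ynext (h1 k) (yOf h1 k) (h1 (k + 1))

lemma ygrad_eq_yOf {Ω : Type*} {q : ℕ} (x : ℕ → Ω → Fin q) (h1 : ℕ → Fin q)
    (ω : Ω) (k : ℕ) (hx : ∀ j ≤ k, x j ω = h1 j) : ∀ j ≤ k, ygrad x j ω = yOf h1 j := by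
  induction k with
  | zero =>
    intro j hj
    interval_cases j
    simp [ygrad, yOf]
  | succ n ih =>
    intro j hj
    rcases Nat.lt_succ_iff_lt_or_eq.mp (Nat.lt_succ_of_le hj) with h | h
    · exact ih (fun i hi => hx i (hi.trans (Nat.le_succ n))) j (Nat.lt_succ_iff.mp h)
    · subst h
      rw [ygrad_succ, hx n (Nat.le_succ n), hx (n+1) le_rfl,
        ih (fun i hi => hx i (hi.trans (Nat.le_succ n))) n le_rfl]
      rfl

open MeasureTheory

lemma liftMarkov {Ω : Type*} [MeasurableSpace Ω] (P : Measure Ω)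
    {q : ℕ} (p : Fin q → Fin q → ℝ) (x : ℕ → Ω → Fin q)
    (hmarkov : ∀ (k : ℕ) (h : ℕ → Fin q) (s : Fin q),
      (P {ω | x (k + 1) ω = s ∧ ∀ j ≤ k, x j ω = h j}).toReal
        = p (h k) s * (P {ω | ∀ j ≤ k, x j ω = h j}).toReal) :
    ∀ (k : ℕ) (h : ℕ → Fin q × Bool) (s : Fin q) (e : Bool),
      (P {ω | (x (k + 1) ω, ygrad x (k + 1) ω) = (s, e)
            ∧ ∀ j ≤ k, (x j ω, ygrad x j ω) = h j}).toReal
        = Qtrans p (h k) (s, e)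
          * (P {ω | ∀ j ≤ k, (x j ω, ygrad x j ω) = h j}).toReal := by
  intro k h s e
  set h1 : ℕ → Fin q := fun j => (h j).1 with hh1
  by_cases hcons : ∀ j ≤ k, (h j).2 = yOf h1 j
  · -- consistent history
    have hset : {ω | ∀ j ≤ k, (x j ω, ygrad x j ω) = h j}
        = {ω | ∀ j ≤ k, x j ω = h1 j} := by
      ext ω
      simp only [Set.mem_setOf_eq, Prod.ext_iff]
      constructor
      · intro hω j hj
        exact (hω j hj).1
      · intro hω j hj
        exact ⟨hω j hj, by rw [ygrad_eq_yOf x h1 ω k hω j hj, hcons j hj]⟩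
    have hk1 : h k = (h1 k, yOf h1 k) := Prod.ext rfl (hcons k le_rfl)
    by_cases he : e = ynext (h1 k) (yOf h1 k) s
    · have hset2 : {ω | (x (k + 1) ω, ygrad x (k + 1) ω) = (s, e)
          ∧ ∀ j ≤ k, (x j ω, ygrad x j ω) = h j}
          = {ω | x (k + 1) ω = s ∧ ∀ j ≤ k, x j ω = h1 j} := by
        ext ω
        simp only [Set.mem_setOf_eq, Prod.ext_iff]
        constructor
        · rintro ⟨⟨hxs, _⟩, hhist⟩
          exact ⟨hxs, fun j hj => (hhist j hj).1⟩
        · rintro ⟨hxs, hhist⟩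
          have hxk : x k ω = h1 k := hhist k le_rfl
          have hyk : ygrad x k ω = yOf h1 k := ygrad_eq_yOf x h1 ω k hhist k le_rfl
          refine ⟨⟨hxs, ?_⟩, fun j hj =>
            ⟨hhist j hj, by rw [ygrad_eq_yOf x h1 ω k hhist j hj, hcons j hj]⟩⟩
          rw [ygrad_succ, hxk, hxs, hyk, he]
      rw [hset2, hset, hmarkov k h1 s, hk1, he, Qtrans_eq_of_eq]
    · -- e inconsistent with the forced value: both sides vanish
      have hempty : {ω | (x (k + 1) ω, ygrad x (k + 1) ω) = (s, e)
          ∧ ∀ j ≤ k, (x j ω, ygrad x j ω) = h j} = ∅ := by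
        ext ω
        simp only [Set.mem_setOf_eq, Set.mem_empty_iff_false, iff_false, not_and,
          Prod.ext_iff]
        rintro ⟨hxs, hye⟩ hhist
        have hhist1 : ∀ j ≤ k, x j ω = h1 j := fun j hj => (hhist j hj).1
        have hxk : x k ω = h1 k := hhist1 k le_rfl
        have hyk : ygrad x k ω = yOf h1 k := ygrad_eq_yOf x h1 ω k hhist1 k le_rfl
        apply he
        rw [← hye, ygrad_succ, hxk, hxs, hyk]
      rw [hempty, hk1, Qtrans_eq_zero p _ _ _ _ he]
      simp
  · -- inconsistent history: both events are empty
    push_neg at hcons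
    obtain ⟨j, hj, hne⟩ := hcons
    have hempty : {ω | ∀ i ≤ k, (x i ω, ygrad x i ω) = h i} = ∅ := by
      rw [Set.eq_empty_iff_forall_notMem]
      intro ω hhist
      simp only [Set.mem_setOf_eq] at hhist
      have hhist1 : ∀ i ≤ k, x i ω = h1 i := fun i hi => congrArg Prod.fst (hhist i hi)
      apply hne
      rw [← congrArg Prod.snd (hhist j hj), ygrad_eq_yOf x h1 ω k hhist1 j hj]
    have hempty2 : {ω | (x (k + 1) ω, ygrad x (k + 1) ω) = (s, e)
        ∧ ∀ i ≤ k, (x i ω, ygrad x i ω) = h i} = ∅ := by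
      rw [Set.eq_empty_iff_forall_notMem]
      intro ω hω
      have := Set.eq_empty_iff_forall_notMem.mp hempty ω
      exact this hω.2
    rw [hempty, hempty2]
    simp

lemma piSum {q : ℕ} (p : Fin q → Fin q → ℝ) (π : Fin q → ℝ)
    (hpdiag : ∀ r, p r r < 1) (hπstat : ∀ s, ∑ r, π r * p r s = π s) (r : Fin q) :
    piLift p π (r, true) + piLift p π (r, false) = π r := by
  have hc : (1 : ℝ) - p r r ≠ 0 := sub_ne_zero.mpr (hpdiag r).ne'
  have hins : (univ.filter fun t : Fin q => ¬ t < r) = insert r (univ.filter fun t => r < t) := by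
    ext t
    simp only [mem_insert, mem_filter, mem_univ, true_and, not_lt, le_iff_lt_or_eq]
    constructor
    · rintro (h | h)
      · exact Or.inr h
      · exact Or.inl h.symm
    · rintro (h | h)
      · exact Or.inr h.symm
      · exact Or.inl h
  have hstat := hπstat r
  rw [← Finset.sum_filter_add_sum_filter_not univ (fun t => t < r) (fun t => π t * p t r),
    hins, Finset.sum_insert (by simp)] at hstat
  have k1 : piLift p π (r, true)
      = (1 - p r r)⁻¹ * ∑ t ∈ univ.filter (fun t => t < r), π t * p t r := rfl
  have k2 : piLift p π (r, false)
      = (1 - p r r)⁻¹ * ∑ t ∈ univ.filter (fun t => r < t), π t * p t r := rfl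
  have hAB : (∑ t ∈ univ.filter (fun t => t < r), π t * p t r)
      + ∑ t ∈ univ.filter (fun t => r < t), π t * p t r = π r * (1 - p r r) := by
    rw [mul_sub, mul_one]; linarith
  rw [k1, k2, ← mul_add, hAB]
  field_simp

lemma stationary {q : ℕ} (p : Fin q → Fin q → ℝ) (π : Fin q → ℝ)
    (hpdiag : ∀ r, p r r < 1) (hπstat : ∀ s, ∑ r, π r * p r s = π s) :
    ∀ se : Fin q × Bool,
      ∑ re : Fin q × Bool, piLift p π re * Qtrans p re se = piLift p π se := by
  rintro ⟨s, e⟩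
  have hc : (1 : ℝ) - p s s ≠ 0 := sub_ne_zero.mpr (hpdiag s).ne'
  rw [Fintype.sum_prod_type]
  simp only [Fintype.sum_bool]
  cases e
  · -- e = false
    have hq : ∀ r : Fin q,
        piLift p π (r, true) * Qtrans p (r, true) (s, false)
          + piLift p π (r, false) * Qtrans p (r, false) (s, false)
        = (if s < r then piLift p π (r, true) * p r s else 0)
          + (if s ≤ r then piLift p π (r, false) * p r s else 0) := by
      intro r
      have hiff : (s < r ∨ r = s ∧ False) ↔ s < r := by tauto
      have hiff2 : (s < r ∨ r = s) ↔ s ≤ r := by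
        rw [Fin.lt_def, Fin.le_def, Fin.ext_iff]; omega
      simp only [Qtrans, if_false, Bool.false_eq_true, reduceCtorEq, and_false, or_false,
        and_true, mul_ite, mul_zero]
      rw [if_congr hiff2 rfl rfl]
    rw [Finset.sum_congr rfl (fun r _ => hq r), Finset.sum_add_distrib,
      ← Finset.sum_filter, ← Finset.sum_filter]
    have hins : (univ.filter fun r : Fin q => s ≤ r) = insert s (univ.filter fun r => s < r) := by
      ext t
      simp only [mem_insert, mem_filter, mem_univ, true_and, le_iff_lt_or_eq]
      tauto
    rw [hins, Finset.sum_insert (by simp)]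
    have hS : (∑ t ∈ univ.filter (fun t : Fin q => s < t), piLift p π (t, true) * p t s)
        + ∑ t ∈ univ.filter (fun t : Fin q => s < t), piLift p π (t, false) * p t s
        = ∑ t ∈ univ.filter (fun t : Fin q => s < t), π t * p t s := by
      rw [← Finset.sum_add_distrib]
      exact Finset.sum_congr rfl fun t _ => by
        rw [← add_mul, piSum p π hpdiag hπstat t]
    have hpil : piLift p π (s, false)
        = (1 - p s s)⁻¹ * ∑ t ∈ univ.filter (fun t : Fin q => s < t), π t * p t s := rfl
    rw [hpil, ← hS]
    field_simp
    ring
  · -- e = true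
    have hq : ∀ r : Fin q,
        piLift p π (r, true) * Qtrans p (r, true) (s, true)
          + piLift p π (r, false) * Qtrans p (r, false) (s, true)
        = (if r ≤ s then piLift p π (r, true) * p r s else 0)
          + (if r < s then piLift p π (r, false) * p r s else 0) := by
      intro r
      have hiff2 : (r < s ∨ r = s) ↔ r ≤ s := by
        rw [Fin.lt_def, Fin.le_def, Fin.ext_iff]; omega
      simp only [Qtrans, if_true, Bool.false_eq_true, reduceCtorEq, and_false, or_false,
        and_true, mul_ite, mul_zero]
      rw [if_congr hiff2 rfl rfl]
    rw [Finset.sum_congr rfl (fun r _ => hq r), Finset.sum_add_distrib,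
      ← Finset.sum_filter, ← Finset.sum_filter]
    have hins : (univ.filter fun r : Fin q => r ≤ s) = insert s (univ.filter fun r => r < s) := by
      ext t
      simp only [mem_insert, mem_filter, mem_univ, true_and, le_iff_lt_or_eq]
      tauto
    rw [hins, Finset.sum_insert (by simp)]
    have hS : (∑ t ∈ univ.filter (fun t : Fin q => t < s), piLift p π (t, true) * p t s)
        + ∑ t ∈ univ.filter (fun t : Fin q => t < s), piLift p π (t, false) * p t s
        = ∑ t ∈ univ.filter (fun t : Fin q => t < s), π t * p t s := by
      rw [← Finset.sum_add_distrib]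
      exact Finset.sum_congr rfl fun t _ => by
        rw [← add_mul, piSum p π hpdiag hπstat t]
    have hpil : piLift p π (s, true)
        = (1 - p s s)⁻¹ * ∑ t ∈ univ.filter (fun t : Fin q => t < s), π t * p t s := rfl
    rw [hpil, ← hS]
    field_simp
    ring

/-- for an ergodic Markov chain `(x_k)` on `[q]` with transition
probabilities `p` (with `p_{r,r} < 1`), stationary distribution `π`, started at
stationarity, the process `(x_k, y_k)` is a Markov chain with the transition
probabilities `Qtrans p`, and `piLift p π` is a stationary measure for it. -/
theorem stmt18
    {Ω : Type*} [MeasurableSpace Ω] (P : Measure Ω) [IsProbabilityMeasure P]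
    (q : ℕ) (p : Fin q → Fin q → ℝ)
    (hp0 : ∀ r s, 0 ≤ p r s) (hprow : ∀ r, ∑ s, p r s = 1)
    (hpdiag : ∀ r, p r r < 1)
    -- ergodicity (irreducible and aperiodic, i.e. primitive)
    (herg : ∃ k : ℕ, ∀ r s, 0 < ((Matrix.of p) ^ k) r s)
    (π : Fin q → ℝ) (hπ0 : ∀ r, 0 ≤ π r) (hπ1 : ∑ r, π r = 1)
    (hπstat : ∀ s, ∑ r, π r * p r s = π s)
    (x : ℕ → Ω → Fin q) (hxmeas : ∀ k, Measurable (x k))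
    -- started at stationarity
    (hstart : ∀ r, (P {ω | x 0 ω = r}).toReal = π r)
    -- Markov property of `(x_k)` with transition probabilities `p`
    (hmarkov : ∀ (k : ℕ) (h : ℕ → Fin q) (s : Fin q),
      (P {ω | x (k + 1) ω = s ∧ ∀ j ≤ k, x j ω = h j}).toReal
        = p (h k) s * (P {ω | ∀ j ≤ k, x j ω = h j}).toReal) :
    -- the lifted process is Markov with transition probabilities `Qtrans p` ...
    (∀ (k : ℕ) (h : ℕ → Fin q × Bool) (s : Fin q) (e : Bool),
      (P {ω | (x (k + 1) ω, ygrad x (k + 1) ω) = (s, e)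
            ∧ ∀ j ≤ k, (x j ω, ygrad x j ω) = h j}).toReal
        = Qtrans p (h k) (s, e)
          * (P {ω | ∀ j ≤ k, (x j ω, ygrad x j ω) = h j}).toReal)
    -- ... and `piLift p π` is stationary for it
    ∧ (∀ se : Fin q × Bool,
        ∑ re : Fin q × Bool, piLift p π re * Qtrans p re se = piLift p π se) :=
  ⟨liftMarkov P p x hmarkov, stationary p π hpdiag hπstat⟩

end
end
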